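/- arXiv:1704.05353 — 9 statements merged into one kernel-verified Lean document; each statement's English description precedes it below -/
import Mathlib

section
/- Coercivity of the energy density normal to the hyperboloids (Lemma 2.1): Let t > 0, x ∈ ℝ³ with t > |x|, write r = |x| and ρ = √(t² − r²). For v ∈ ℝ³ set v⁰ = √(1+|v|²) and let v_r = (x·v)/|x| denote the radial component of v (with v_r := 0 when x = 0). Then for every nonnegative measurable function f : ℝ³ → [0,∞] one has the inequality (of integrals in the extended sense) ∫_{ℝ³} f(v)·(t v⁰ − x·v)/ρ dv ≥ (t/(2ρ)) ∫_{ℝ³} f(v)·[ (1 − r/t)((v⁰)² + v_r²) + (|v|² − v_r²) + 1 ] · dv/v⁰. -/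
open MeasureTheory
open scoped ENNReal

noncomputable section

/-- `r = |x|`, the Euclidean norm of `x ∈ ℝ³`. -/
def rad (x : Fin 3 → ℝ) : ℝ := Real.sqrt (∑ i, (x i) ^ 2)

/-- `v⁰ = √(1+|v|²)`. -/
def vzero (v : Fin 3 → ℝ) : ℝ := Real.sqrt (1 + ∑ i, (v i) ^ 2)

/-- Radial component `v_r = (x·v)/|x|` of `v`, set to `0` when `x = 0`. -/
def vrad (x v : Fin 3 → ℝ) : ℝ :=
  if x = 0 then 0 else (∑ i, x i * v i) / rad x

lemma rad_nonneg (x : Fin 3 → ℝ) : 0 ≤ rad x := Real.sqrt_nonneg _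

lemma dot_eq_rad_mul_vrad (x v : Fin 3 → ℝ) :
    (∑ i, x i * v i) = rad x * vrad x v := by
  unfold vrad
  by_cases h : x = 0
  · subst h; simp
  · rw [if_neg h]
    have hx : 0 < rad x := by
      have : ∃ i, x i ≠ 0 := by
        by_contra hc
        push_neg at hc
        exact h (funext hc)
      obtain ⟨i, hi⟩ := this
      apply Real.sqrt_pos.2
      have : 0 < (x i) ^ 2 := by positivity
      have hle : (x i)^2 ≤ ∑ j, (x j)^2 :=
        Finset.single_le_sum (fun j _ => sq_nonneg (x j)) (Finset.mem_univ i)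
      linarith
    field_simp

/-- Lemma 2.1 (coercivity of the energy density normal to the hyperboloids): for `t > |x|`,
`ρ = √(t²−r²)`, and any nonnegative measurable `f`,
`∫ f(v)(t v⁰ − x·v)/ρ dv ≥ (t/(2ρ)) ∫ f(v)[(1−r/t)((v⁰)²+v_r²) + (|v|²−v_r²) + 1] dv/v⁰`. -/
theorem coercivity_energy_density
    (t : ℝ) (x : Fin 3 → ℝ) (ht : 0 < t) (hx : rad x < t)
    (f : (Fin 3 → ℝ) → ℝ≥0∞) (hf : Measurable f) :
    (∫⁻ v : Fin 3 → ℝ, f v * ENNReal.ofReal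
        ((t * vzero v - ∑ i, x i * v i) / Real.sqrt (t ^ 2 - rad x ^ 2)))
      ≥ ENNReal.ofReal (t / (2 * Real.sqrt (t ^ 2 - rad x ^ 2))) *
          ∫⁻ v : Fin 3 → ℝ, f v * ENNReal.ofReal
            (((1 - rad x / t) * ((vzero v) ^ 2 + (vrad x v) ^ 2)
                + ((∑ i, (v i) ^ 2) - (vrad x v) ^ 2) + 1) / vzero v) := by
  have hr0 : 0 ≤ rad x := rad_nonneg x
  have hρ : 0 < Real.sqrt (t ^ 2 - rad x ^ 2) := Real.sqrt_pos.2 (by nlinarith)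
  rw [ge_iff_le, ← lintegral_const_mul' _ _ ENNReal.ofReal_ne_top]
  apply lintegral_mono
  intro v
  dsimp only
  rw [← mul_assoc, mul_comm (ENNReal.ofReal _) (f v), mul_assoc]
  apply mul_le_mul_right
  rw [← ENNReal.ofReal_mul (by positivity)]
  apply ENNReal.ofReal_le_ofReal
  have hw : 0 < vzero v := Real.sqrt_pos.2 (by positivity)
  have hw2 : vzero v ^ 2 = 1 + ∑ i, (v i) ^ 2 := Real.sq_sqrt (by positivity)
  rw [dot_eq_rad_mul_vrad]
  set r := rad x
  set ρ := Real.sqrt (t ^ 2 - r ^ 2)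
  set w := vzero v
  set u := vrad x v
  set s := ∑ i, (v i) ^ 2
  rw [div_mul_div_comm, div_le_div_iff₀ (by positivity) hρ]
  have key : 0 ≤ r * (w - u) ^ 2 := by positivity
  have htr : t * (1 - r / t) = t - r := by field_simp
  have base : t * ((1 - r / t) * (w ^ 2 + u ^ 2) + (s - u ^ 2) + 1) ≤ (t * w - r * u) * (2 * w) := by
    nlinarith [key, hw2, htr]
  nlinarith [mul_le_mul_of_nonneg_right base hρ.le]
end
end

section
/- Commutator of the perturbed transport operator with a generalized translation (Lemma 3.1, first identity): for every μ ∈ {0,1,2,3} and every smooth f(t,x,v), [𝐓_φ, 𝐞_μ] f = ∂_{x^μ}(∂_{xⁱ}φ)·V_i f + (∂_{x^μ}φ)·[ −(1/v⁰)·𝐞_0 f + 𝐓_φ f + 2 (∂_{xⁱ}φ)·V_i f ]. -/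
noncomputable section

/-- Phase space point `(t, x, v)`. -/
abbrev Pt : Type := ℝ × (Fin 3 → ℝ) × (Fin 3 → ℝ)

/-- Vertical derivative `V_i f = ∂_{vⁱ} f`. -/
def Vop (i : Fin 3) (f : Pt → ℝ) (p : Pt) : ℝ :=
  fderiv ℝ f p ((0 : ℝ), (0 : Fin 3 → ℝ), Pi.single i 1)

/-- `W f = vⁱ ∂_{vⁱ} f`. -/
def Wop (f : Pt → ℝ) (p : Pt) : ℝ := ∑ i, p.2.2 i * Vop i f p

/-- Derivative of a function of `(t,x)` in the constant spacetime direction `d`. -/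
def Dphi (φ : ℝ × (Fin 3 → ℝ) → ℝ) (d : ℝ × (Fin 3 → ℝ)) (q : ℝ × (Fin 3 → ℝ)) : ℝ :=
  fderiv ℝ φ q d

/-- `𝐓(φ) = v⁰ ∂_t φ + vⁱ ∂_{xⁱ} φ`, evaluated at a phase-space point. -/
def TphiFn (φ : ℝ × (Fin 3 → ℝ) → ℝ) (p : Pt) : ℝ :=
  vzero p.2.2 * Dphi φ ((1 : ℝ), (0 : Fin 3 → ℝ)) (p.1, p.2.1) +
    ∑ i, p.2.2 i * Dphi φ ((0 : ℝ), Pi.single i 1) (p.1, p.2.1)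

/-- Free transport operator `𝐓 f = v⁰ ∂_t f + vⁱ ∂_{xⁱ} f`. -/
def Tfree (f : Pt → ℝ) (p : Pt) : ℝ :=
  vzero p.2.2 * fderiv ℝ f p ((1 : ℝ), (0 : Fin 3 → ℝ), (0 : Fin 3 → ℝ)) +
    ∑ i, p.2.2 i * fderiv ℝ f p ((0 : ℝ), Pi.single i 1, (0 : Fin 3 → ℝ))

/-- Perturbed transport operator `𝐓_φ f = 𝐓 f − (𝐓(φ) vⁱ + ∂_{xⁱ}φ) ∂_{vⁱ} f`. -/
def Tpert (φ : ℝ × (Fin 3 → ℝ) → ℝ) (f : Pt → ℝ) (p : Pt) : ℝ :=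
  Tfree f p -
    ∑ i, (TphiFn φ p * p.2.2 i + Dphi φ ((0 : ℝ), Pi.single i 1) (p.1, p.2.1)) * Vop i f p

/-- Generalized translation `𝐞_d f = ∂_d f − (∂_d φ) · vⁱ ∂_{vⁱ} f` (spacetime direction `d`). -/
def eop (φ : ℝ × (Fin 3 → ℝ) → ℝ) (d : ℝ × (Fin 3 → ℝ)) (f : Pt → ℝ) (p : Pt) : ℝ :=
  fderiv ℝ f p (d.1, d.2, (0 : Fin 3 → ℝ)) - Dphi φ d (p.1, p.2.1) * Wop f p

/-- The coordinate direction `∂_{x^μ}`, `μ ∈ {0,1,2,3}`, with `x⁰ = t`. -/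
def dir4 (μ : Fin 4) : ℝ × (Fin 3 → ℝ) :=
  if _h : (μ : ℕ) = 0 then ((1 : ℝ), (0 : Fin 3 → ℝ))
  else ((0 : ℝ), Pi.single (⟨(μ : ℕ) - 1, by have := μ.isLt; omega⟩ : Fin 3) 1)

section AuxCommutator
variable {E : Type*} [NormedAddCommGroup E] [NormedSpace ℝ E]


lemma dx_smooth (f : E → ℝ) (hf : ContDiff ℝ (⊤:ℕ∞) f) (w : E) :
    ContDiff ℝ (⊤:ℕ∞) (fun x => fderiv ℝ f x w) :=
  (hf.fderiv_right (m := (⊤:ℕ∞)) (by simp)).clm_apply contDiff_const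

lemma fderiv2_diff (f : E → ℝ) (hf : ContDiff ℝ (⊤:ℕ∞) f) (p : E) :
    DifferentiableAt ℝ (fderiv ℝ f) p :=
  ((hf.fderiv_right (m := (⊤:ℕ∞)) (by simp)).differentiable (by simp)).differentiableAt

lemma dx_fderiv (f : E → ℝ) (hf : ContDiff ℝ (⊤:ℕ∞) f) (w u p : E) :
    fderiv ℝ (fun x => fderiv ℝ f x w) p u = fderiv ℝ (fderiv ℝ f) p u w := by
  rw [fderiv_clm_apply (fderiv2_diff f hf p) (differentiableAt_const w)]
  simp

lemma dx_symm (f : E → ℝ) (hf : ContDiff ℝ (⊤:ℕ∞) f) (u w p : E) :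
    fderiv ℝ (fderiv ℝ f) p u w = fderiv ℝ (fderiv ℝ f) p w u :=
  second_derivative_symmetric (fun y => ((hf.differentiable (by simp)) y).hasFDerivAt)
    (fderiv2_diff f hf p).hasFDerivAt u w


/-- projection CLM -/
def pCLM : Pt →L[ℝ] ℝ × (Fin 3 → ℝ) :=
  (ContinuousLinearMap.fst ℝ ℝ ((Fin 3 → ℝ) × (Fin 3 → ℝ))).prod
    ((ContinuousLinearMap.fst ℝ (Fin 3 → ℝ) (Fin 3 → ℝ)).comp
      (ContinuousLinearMap.snd ℝ ℝ ((Fin 3 → ℝ) × (Fin 3 → ℝ))))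

lemma pCLM_apply (p : Pt) : pCLM p = (p.1, p.2.1) := rfl

/-- v-component CLM -/
def vCLM (i : Fin 3) : Pt →L[ℝ] ℝ :=
  (ContinuousLinearMap.proj i).comp
    ((ContinuousLinearMap.snd ℝ (Fin 3 → ℝ) (Fin 3 → ℝ)).comp
      (ContinuousLinearMap.snd ℝ ℝ ((Fin 3 → ℝ) × (Fin 3 → ℝ))))

lemma vCLM_apply (i : Fin 3) (p : Pt) : vCLM i p = p.2.2 i := rfl

section
variable {φ : ℝ × (Fin 3 → ℝ) → ℝ}

lemma psi_diff (hφ : ContDiff ℝ (⊤:ℕ∞) φ) (d : ℝ × (Fin 3 → ℝ)) (p : Pt) :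
    DifferentiableAt ℝ (fun p : Pt => fderiv ℝ φ (p.1, p.2.1) d) p := by
  have : (fun p : Pt => fderiv ℝ φ (p.1, p.2.1) d)
      = (fun q => fderiv ℝ φ q d) ∘ pCLM := rfl
  rw [this]
  exact ((dx_smooth φ hφ d).comp pCLM.contDiff).differentiable (by simp) |>.differentiableAt

lemma psi_fderiv (hφ : ContDiff ℝ (⊤:ℕ∞) φ) (d : ℝ × (Fin 3 → ℝ)) (u p : Pt) :
    fderiv ℝ (fun p : Pt => fderiv ℝ φ (p.1, p.2.1) d) p u
      = fderiv ℝ (fderiv ℝ φ) (p.1, p.2.1) (u.1, u.2.1) d := by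
  have h : (fun p : Pt => fderiv ℝ φ (p.1, p.2.1) d)
      = (fun q => fderiv ℝ φ q d) ∘ pCLM := rfl
  rw [h, fderiv_comp p (((dx_smooth φ hφ d).differentiable (by simp)).differentiableAt)
      pCLM.differentiableAt, pCLM.fderiv]
  show fderiv ℝ (fun q => fderiv ℝ φ q d) (pCLM p) (pCLM u) = _
  rw [pCLM_apply, pCLM_apply, dx_fderiv φ hφ]

end

lemma one_add_sq_pos (v : Fin 3 → ℝ) : 0 < 1 + ∑ i, (v i)^2 := by positivity

lemma vzero_pos (v : Fin 3 → ℝ) : 0 < vzero v := Real.sqrt_pos.2 (one_add_sq_pos v)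

lemma vzero_sq (v : Fin 3 → ℝ) : vzero v ^ 2 = 1 + ∑ i, (v i)^2 :=
  Real.sq_sqrt (one_add_sq_pos v).le

lemma v0c_hasF (p : Pt) :
    HasFDerivAt (fun p : Pt => vzero p.2.2)
      ((1 / (2 * vzero p.2.2)) • (∑ i : Fin 3, (2 * p.2.2 i) • (vCLM i))) p := by
  have hg : HasFDerivAt (fun p : Pt => 1 + ∑ i : Fin 3, (p.2.2 i)^2)
      (∑ i : Fin 3, (2 * p.2.2 i) • (vCLM i)) p := by
    have : HasFDerivAt (fun p : Pt => ∑ i : Fin 3, (p.2.2 i)^2)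
        (∑ i : Fin 3, (2 * p.2.2 i) • (vCLM i)) p := by
      apply HasFDerivAt.fun_sum
      intro i _
      have h1 : HasFDerivAt (fun p : Pt => p.2.2 i) (vCLM i) p := (vCLM i).hasFDerivAt
      have h2 := h1.fun_mul h1
      have e : (2 * p.2.2 i) • (vCLM i) = p.2.2 i • vCLM i + p.2.2 i • vCLM i := by
        rw [two_mul, add_smul]
      rw [e]
      simpa [sq] using h2
    simpa using (hasFDerivAt_const (1:ℝ) p).fun_add this
  have hx : (1 + ∑ i : Fin 3, (p.2.2 i)^2) ≠ 0 := (one_add_sq_pos _).ne'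
  exact hg.sqrt hx

lemma v0c_diff (p : Pt) : DifferentiableAt ℝ (fun p : Pt => vzero p.2.2) p :=
  (v0c_hasF p).differentiableAt

lemma v0c_fderiv (u p : Pt) :
    fderiv ℝ (fun p : Pt => vzero p.2.2) p u = (∑ i, p.2.2 i * u.2.2 i) / vzero p.2.2 := by
  rw [(v0c_hasF p).fderiv]
  have h0 : vzero p.2.2 ≠ 0 := (vzero_pos _).ne'
  simp only [ContinuousLinearMap.smul_apply, ContinuousLinearMap.sum_apply, vCLM_apply,
    smul_eq_mul]
  rw [Finset.mul_sum, Finset.sum_div]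
  congr 1; funext i; field_simp

lemma fd_mul {g h : Pt → ℝ} {p : Pt} (hg : DifferentiableAt ℝ g p)
    (hh : DifferentiableAt ℝ h p) (u : Pt) :
    fderiv ℝ (fun p => g p * h p) p u = fderiv ℝ g p u * h p + g p * fderiv ℝ h p u := by
  rw [fderiv_fun_mul hg hh]
  simp only [ContinuousLinearMap.add_apply, ContinuousLinearMap.smul_apply, smul_eq_mul]
  ring

lemma fd_sum {g : Fin 3 → Pt → ℝ} {p : Pt} (hg : ∀ i, DifferentiableAt ℝ (g i) p) (u : Pt) :
    fderiv ℝ (fun p => ∑ i, g i p) p u = ∑ i, fderiv ℝ (g i) p u := by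
  rw [fderiv_fun_sum fun i _ => hg i]
  simp

lemma fd_sub {g h : Pt → ℝ} {p : Pt} (hg : DifferentiableAt ℝ g p)
    (hh : DifferentiableAt ℝ h p) (u : Pt) :
    fderiv ℝ (fun p => g p - h p) p u = fderiv ℝ g p u - fderiv ℝ h p u := by
  rw [fderiv_fun_sub hg hh]; simp

lemma fd_add {g h : Pt → ℝ} {p : Pt} (hg : DifferentiableAt ℝ g p)
    (hh : DifferentiableAt ℝ h p) (u : Pt) :
    fderiv ℝ (fun p => g p + h p) p u = fderiv ℝ g p u + fderiv ℝ h p u := by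
  rw [fderiv_fun_add hg hh]; simp

lemma vc_diff (i : Fin 3) (p : Pt) : DifferentiableAt ℝ (fun p : Pt => p.2.2 i) p :=
  (vCLM i).differentiableAt

lemma vc_fderiv (i : Fin 3) (u p : Pt) : fderiv ℝ (fun p : Pt => p.2.2 i) p u = u.2.2 i := by
  rw [show (fun p : Pt => p.2.2 i) = ⇑(vCLM i) from rfl, (vCLM i).fderiv]; rfl

section
variable {φ : ℝ × (Fin 3 → ℝ) → ℝ} {f : Pt → ℝ}

lemma dxf_diff (hf : ContDiff ℝ (⊤:ℕ∞) f) (w p : Pt) :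
    DifferentiableAt ℝ (fun p => fderiv ℝ f p w) p :=
  ((dx_smooth f hf w).differentiable (by simp)).differentiableAt

lemma Vop_diff (hf : ContDiff ℝ (⊤:ℕ∞) f) (i : Fin 3) (p : Pt) :
    DifferentiableAt ℝ (Vop i f) p := dxf_diff hf _ p

lemma Vop_fderiv (hf : ContDiff ℝ (⊤:ℕ∞) f) (i : Fin 3) (u p : Pt) :
    fderiv ℝ (Vop i f) p u
      = fderiv ℝ (fderiv ℝ f) p u ((0:ℝ), (0:Fin 3 → ℝ), Pi.single i 1) :=
  dx_fderiv f hf _ u p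

lemma Wop_diff (hf : ContDiff ℝ (⊤:ℕ∞) f) (p : Pt) : DifferentiableAt ℝ (Wop f) p := by
  have : Wop f = fun p => ∑ i, p.2.2 i * Vop i f p := rfl
  rw [this]
  exact DifferentiableAt.fun_sum fun i _ => (vc_diff i p).fun_mul (Vop_diff hf i p)

lemma Wop_fderiv (hf : ContDiff ℝ (⊤:ℕ∞) f) (u p : Pt) :
    fderiv ℝ (Wop f) p u
      = ∑ i, (u.2.2 i * Vop i f p
          + p.2.2 i * fderiv ℝ (fderiv ℝ f) p u ((0:ℝ), (0:Fin 3 → ℝ), Pi.single i 1)) := by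
  have h : Wop f = fun p => ∑ i, (fun p : Pt => p.2.2 i) p * Vop i f p := rfl
  rw [h, fd_sum fun i => (vc_diff i p).fun_mul (Vop_diff hf i p)]
  refine Finset.sum_congr rfl fun i _ => ?_
  rw [fd_mul (vc_diff i p) (Vop_diff hf i p), vc_fderiv, Vop_fderiv hf]

lemma TphiFn_diff (hφ : ContDiff ℝ (⊤:ℕ∞) φ) (p : Pt) :
    DifferentiableAt ℝ (TphiFn φ) p := by
  have h : TphiFn φ = fun p : Pt => vzero p.2.2 * fderiv ℝ φ (p.1, p.2.1) ((1:ℝ), (0:Fin 3 → ℝ))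
      + ∑ i, p.2.2 i * fderiv ℝ φ (p.1, p.2.1) ((0:ℝ), Pi.single i 1) := rfl
  rw [h]
  exact ((v0c_diff p).fun_mul (psi_diff hφ _ p)).add
    (DifferentiableAt.fun_sum fun i _ => (vc_diff i p).fun_mul (psi_diff hφ _ p))

lemma TphiFn_fderiv (hφ : ContDiff ℝ (⊤:ℕ∞) φ) (u p : Pt) :
    fderiv ℝ (TphiFn φ) p u
      = (∑ i, p.2.2 i * u.2.2 i) / vzero p.2.2 * fderiv ℝ φ (p.1, p.2.1) ((1:ℝ), (0:Fin 3 → ℝ))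
        + vzero p.2.2 * fderiv ℝ (fderiv ℝ φ) (p.1, p.2.1) (u.1, u.2.1) ((1:ℝ), (0:Fin 3 → ℝ))
        + ∑ i, (u.2.2 i * fderiv ℝ φ (p.1, p.2.1) ((0:ℝ), Pi.single i 1)
            + p.2.2 i * fderiv ℝ (fderiv ℝ φ) (p.1, p.2.1) (u.1, u.2.1) ((0:ℝ), Pi.single i 1)) := by
  have h : TphiFn φ = fun p : Pt =>
      (fun p : Pt => vzero p.2.2) p * (fun p : Pt => fderiv ℝ φ (p.1, p.2.1) ((1:ℝ), (0:Fin 3 → ℝ))) p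
      + ∑ i, (fun p : Pt => p.2.2 i) p * (fun p : Pt => fderiv ℝ φ (p.1, p.2.1) ((0:ℝ), Pi.single i 1)) p := rfl
  rw [h, fd_add ((v0c_diff p).fun_mul (psi_diff hφ _ p))
      (DifferentiableAt.fun_sum fun i _ => (vc_diff i p).fun_mul (psi_diff hφ _ p)),
    fd_mul (v0c_diff p) (psi_diff hφ _ p), v0c_fderiv, psi_fderiv hφ,
    fd_sum fun i => (vc_diff i p).fun_mul (psi_diff hφ _ p)]
  congr 1
  exact Finset.sum_congr rfl fun i _ =>
    by rw [fd_mul (vc_diff i p) (psi_diff hφ _ p), vc_fderiv, psi_fderiv hφ]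

lemma Tfree_diff (hf : ContDiff ℝ (⊤:ℕ∞) f) (p : Pt) :
    DifferentiableAt ℝ (Tfree f) p := by
  have h : Tfree f = fun p : Pt => vzero p.2.2 * fderiv ℝ f p ((1:ℝ), (0:Fin 3 → ℝ), (0:Fin 3 → ℝ))
      + ∑ i, p.2.2 i * fderiv ℝ f p ((0:ℝ), Pi.single i 1, (0:Fin 3 → ℝ)) := rfl
  rw [h]
  exact ((v0c_diff p).fun_mul (dxf_diff hf _ p)).add
    (DifferentiableAt.fun_sum fun i _ => (vc_diff i p).fun_mul (dxf_diff hf _ p))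

lemma Tfree_fderiv (hf : ContDiff ℝ (⊤:ℕ∞) f) (u p : Pt) :
    fderiv ℝ (Tfree f) p u
      = (∑ i, p.2.2 i * u.2.2 i) / vzero p.2.2 * fderiv ℝ f p ((1:ℝ), (0:Fin 3 → ℝ), (0:Fin 3 → ℝ))
        + vzero p.2.2 * fderiv ℝ (fderiv ℝ f) p u ((1:ℝ), (0:Fin 3 → ℝ), (0:Fin 3 → ℝ))
        + ∑ i, (u.2.2 i * fderiv ℝ f p ((0:ℝ), Pi.single i 1, (0:Fin 3 → ℝ))
            + p.2.2 i * fderiv ℝ (fderiv ℝ f) p u ((0:ℝ), Pi.single i 1, (0:Fin 3 → ℝ))) := by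
  have h : Tfree f = fun p : Pt =>
      (fun p : Pt => vzero p.2.2) p * (fun p : Pt => fderiv ℝ f p ((1:ℝ), (0:Fin 3 → ℝ), (0:Fin 3 → ℝ))) p
      + ∑ i, (fun p : Pt => p.2.2 i) p * (fun p : Pt => fderiv ℝ f p ((0:ℝ), Pi.single i 1, (0:Fin 3 → ℝ))) p := rfl
  rw [h, fd_add ((v0c_diff p).fun_mul (dxf_diff hf _ p))
      (DifferentiableAt.fun_sum fun i _ => (vc_diff i p).fun_mul (dxf_diff hf _ p)),
    fd_mul (v0c_diff p) (dxf_diff hf _ p), v0c_fderiv, dx_fderiv f hf,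
    fd_sum fun i => (vc_diff i p).fun_mul (dxf_diff hf _ p)]
  congr 1
  exact Finset.sum_congr rfl fun i _ =>
    by rw [fd_mul (vc_diff i p) (dxf_diff hf _ p), vc_fderiv, dx_fderiv f hf]

end

section
variable {φ : ℝ × (Fin 3 → ℝ) → ℝ} {f : Pt → ℝ}

lemma coef_diff (hφ : ContDiff ℝ (⊤:ℕ∞) φ) (i : Fin 3) (p : Pt) :
    DifferentiableAt ℝ
      (fun p : Pt => TphiFn φ p * p.2.2 i + fderiv ℝ φ (p.1, p.2.1) ((0:ℝ), Pi.single i 1)) p :=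
  ((TphiFn_diff hφ p).fun_mul (vc_diff i p)).fun_add (psi_diff hφ _ p)

lemma Tpert_diff (hφ : ContDiff ℝ (⊤:ℕ∞) φ) (hf : ContDiff ℝ (⊤:ℕ∞) f) (p : Pt) :
    DifferentiableAt ℝ (Tpert φ f) p := by
  have h : Tpert φ f = fun p : Pt => Tfree f p -
      ∑ i, (TphiFn φ p * p.2.2 i + fderiv ℝ φ (p.1, p.2.1) ((0:ℝ), Pi.single i 1)) * Vop i f p := rfl
  rw [h]
  exact (Tfree_diff hf p).sub
    (DifferentiableAt.fun_sum fun i _ => (coef_diff hφ i p).fun_mul (Vop_diff hf i p))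

lemma Tpert_fderiv (hφ : ContDiff ℝ (⊤:ℕ∞) φ) (hf : ContDiff ℝ (⊤:ℕ∞) f) (u p : Pt) :
    fderiv ℝ (Tpert φ f) p u
      = fderiv ℝ (Tfree f) p u
        - ∑ i, ((fderiv ℝ (TphiFn φ) p u * p.2.2 i + TphiFn φ p * u.2.2 i
              + fderiv ℝ (fderiv ℝ φ) (p.1, p.2.1) (u.1, u.2.1) ((0:ℝ), Pi.single i 1)) * Vop i f p
            + (TphiFn φ p * p.2.2 i + fderiv ℝ φ (p.1, p.2.1) ((0:ℝ), Pi.single i 1))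
              * fderiv ℝ (fderiv ℝ f) p u ((0:ℝ), (0:Fin 3 → ℝ), Pi.single i 1)) := by
  have h : Tpert φ f = fun p : Pt => Tfree f p -
      ∑ i, (fun p : Pt => (TphiFn φ p * p.2.2 i + fderiv ℝ φ (p.1, p.2.1) ((0:ℝ), Pi.single i 1))
              * Vop i f p) p := rfl
  rw [h, fd_sub (Tfree_diff hf p)
      (DifferentiableAt.fun_sum fun i _ => (coef_diff hφ i p).fun_mul (Vop_diff hf i p)),
    fd_sum fun i => (coef_diff hφ i p).fun_mul (Vop_diff hf i p)]
  congr 1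
  refine Finset.sum_congr rfl fun i _ => ?_
  have h2 : (fun p : Pt => (TphiFn φ p * p.2.2 i + fderiv ℝ φ (p.1, p.2.1) ((0:ℝ), Pi.single i 1))
        * Vop i f p)
      = fun p : Pt => ((fun p : Pt => (fun p : Pt => TphiFn φ p) p * (fun p : Pt => p.2.2 i) p) p
          + (fun p : Pt => fderiv ℝ φ (p.1, p.2.1) ((0:ℝ), Pi.single i 1)) p) * Vop i f p := rfl
  rw [h2, fd_mul (((TphiFn_diff hφ p).fun_mul (vc_diff i p)).fun_add (psi_diff hφ _ p)) (Vop_diff hf i p),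
    fd_add ((TphiFn_diff hφ p).fun_mul (vc_diff i p)) (psi_diff hφ _ p),
    fd_mul (TphiFn_diff hφ p) (vc_diff i p), vc_fderiv, psi_fderiv hφ, Vop_fderiv hf]

lemma eop_diff (hφ : ContDiff ℝ (⊤:ℕ∞) φ) (hf : ContDiff ℝ (⊤:ℕ∞) f)
    (d : ℝ × (Fin 3 → ℝ)) (p : Pt) : DifferentiableAt ℝ (eop φ d f) p := by
  have h : eop φ d f = fun p : Pt =>
      fderiv ℝ f p (d.1, d.2, (0:Fin 3 → ℝ)) - fderiv ℝ φ (p.1, p.2.1) d * Wop f p := rfl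
  rw [h]
  exact (dxf_diff hf _ p).fun_sub ((psi_diff hφ _ p).fun_mul (Wop_diff hf p))

lemma eop_fderiv (hφ : ContDiff ℝ (⊤:ℕ∞) φ) (hf : ContDiff ℝ (⊤:ℕ∞) f)
    (d : ℝ × (Fin 3 → ℝ)) (u p : Pt) :
    fderiv ℝ (eop φ d f) p u
      = fderiv ℝ (fderiv ℝ f) p u (d.1, d.2, (0:Fin 3 → ℝ))
        - (fderiv ℝ (fderiv ℝ φ) (p.1, p.2.1) (u.1, u.2.1) d * Wop f p
          + fderiv ℝ φ (p.1, p.2.1) d * fderiv ℝ (Wop f) p u) := by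
  have h : eop φ d f = fun p : Pt =>
      (fun p : Pt => fderiv ℝ f p (d.1, d.2, (0:Fin 3 → ℝ))) p
        - (fun p : Pt => fderiv ℝ φ (p.1, p.2.1) d) p * Wop f p := rfl
  rw [h, fd_sub (dxf_diff hf _ p) ((psi_diff hφ _ p).fun_mul (Wop_diff hf p)),
    fd_mul (psi_diff hφ _ p) (Wop_diff hf p), psi_fderiv hφ, dx_fderiv f hf]

end

set_option maxHeartbeats 4000000 in
theorem key (φ : ℝ × (Fin 3 → ℝ) → ℝ) (hφ : ContDiff ℝ (⊤ : ℕ∞) φ)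
    (f : Pt → ℝ) (hf : ContDiff ℝ (⊤ : ℕ∞) f) (d : ℝ × (Fin 3 → ℝ)) (p : Pt) :
    Tpert φ (eop φ d f) p - eop φ d (Tpert φ f) p =
      (∑ i, Dphi (fun q => Dphi φ ((0 : ℝ), Pi.single i 1) q) d (p.1, p.2.1)
          * Vop i f p)
      + Dphi φ d (p.1, p.2.1) *
          (-(1 / vzero p.2.2) * eop φ ((1 : ℝ), (0 : Fin 3 → ℝ)) f p + Tpert φ f p
            + 2 * ∑ i, Dphi φ ((0 : ℝ), Pi.single i 1) (p.1, p.2.1) * Vop i f p) := by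
  have hDphi2 : ∀ i : Fin 3, Dphi (fun q => Dphi φ ((0 : ℝ), Pi.single i 1) q) d (p.1, p.2.1)
      = fderiv ℝ (fderiv ℝ φ) (p.1, p.2.1) d ((0 : ℝ), Pi.single i 1) := fun i =>
    dx_fderiv φ hφ _ d (p.1, p.2.1)
  simp only [Tpert, Tfree, Vop, Wop, eop, Dphi, TphiFn, hDphi2]
  simp only [eop_fderiv hφ hf, Tpert_fderiv hφ hf, Tfree_fderiv hf, TphiFn_fderiv hφ,
    Wop_fderiv hf, Vop_fderiv hf]
  simp only [Tpert, Tfree, Vop, Wop, eop, Dphi, TphiFn]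
  simp only [dx_fderiv φ hφ]
  simp only [Pi.single_apply, mul_ite, ite_mul, one_mul, mul_one, zero_mul, mul_zero,
    Finset.sum_ite_eq', Finset.mem_univ, if_true, Prod.mk.eta]
  simp only [Pi.zero_apply, mul_zero, zero_mul, add_zero, zero_add, Finset.sum_const_zero,
    Prod.mk_zero_zero, map_zero, ContinuousLinearMap.zero_apply, Finset.sum_add_distrib,
    Finset.sum_ite_eq', Finset.mem_univ, if_true, zero_div]
  have sF : ∀ a b : Pt, fderiv ℝ (fderiv ℝ f) p a b = fderiv ℝ (fderiv ℝ f) p b a :=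
    fun a b => dx_symm f hf a b p
  have sP : ∀ a b : ℝ × (Fin 3 → ℝ), fderiv ℝ (fderiv ℝ φ) (p.1, p.2.1) a b
      = fderiv ℝ (fderiv ℝ φ) (p.1, p.2.1) b a := fun a b => dx_symm φ hφ a b (p.1, p.2.1)
  have h1 : fderiv ℝ (fderiv ℝ f) p ((d.1, d.2, 0) : Pt) ((1:ℝ), (0 : (Fin 3 → ℝ) × (Fin 3 → ℝ)))
      = fderiv ℝ (fderiv ℝ f) p ((1:ℝ), (0 : (Fin 3 → ℝ) × (Fin 3 → ℝ))) (d.1, d.2, 0) := sF _ _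
  have h2 : ∀ i : Fin 3, fderiv ℝ (fderiv ℝ f) p ((d.1, d.2, 0) : Pt) ((0:ℝ), Pi.single i 1, (0:Fin 3 → ℝ))
      = fderiv ℝ (fderiv ℝ f) p ((0:ℝ), Pi.single i 1, (0:Fin 3 → ℝ)) (d.1, d.2, 0) := fun i => sF _ _
  have h3 : ∀ i : Fin 3, fderiv ℝ (fderiv ℝ f) p ((d.1, d.2, 0) : Pt) ((0:ℝ), (0:Fin 3 → ℝ), Pi.single i 1)
      = fderiv ℝ (fderiv ℝ f) p ((0:ℝ), (0:Fin 3 → ℝ), Pi.single i 1) (d.1, d.2, 0) := fun i => sF _ _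
  have h4 : ∀ i : Fin 3, fderiv ℝ (fderiv ℝ f) p ((0:ℝ), (0:Fin 3 → ℝ), Pi.single i 1) ((1:ℝ), (0 : (Fin 3 → ℝ) × (Fin 3 → ℝ)))
      = fderiv ℝ (fderiv ℝ f) p ((1:ℝ), (0 : (Fin 3 → ℝ) × (Fin 3 → ℝ))) ((0:ℝ), (0:Fin 3 → ℝ), Pi.single i 1) := fun i => sF _ _
  have h5 : ∀ i j : Fin 3, fderiv ℝ (fderiv ℝ f) p ((0:ℝ), (0:Fin 3 → ℝ), Pi.single i 1) ((0:ℝ), Pi.single j 1, (0:Fin 3 → ℝ))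
      = fderiv ℝ (fderiv ℝ f) p ((0:ℝ), Pi.single j 1, (0:Fin 3 → ℝ)) ((0:ℝ), (0:Fin 3 → ℝ), Pi.single i 1) := fun i j => sF _ _
  have g1 : fderiv ℝ (fderiv ℝ φ) (p.1, p.2.1) ((1:ℝ), (0:Fin 3 → ℝ)) d
      = fderiv ℝ (fderiv ℝ φ) (p.1, p.2.1) d ((1:ℝ), (0:Fin 3 → ℝ)) := sP _ _
  have g2 : ∀ i : Fin 3, fderiv ℝ (fderiv ℝ φ) (p.1, p.2.1) ((0:ℝ), Pi.single i 1) d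
      = fderiv ℝ (fderiv ℝ φ) (p.1, p.2.1) d ((0:ℝ), Pi.single i 1) := fun i => sP _ _
  simp only [h1, h2, h3, h4, h5, g1, g2]
  simp only [Fin.sum_univ_three]
  have h6a : fderiv ℝ (fderiv ℝ f) p ((0:ℝ), (0:Fin 3 → ℝ), Pi.single 1 1) ((0:ℝ), (0:Fin 3 → ℝ), Pi.single 0 1)
      = fderiv ℝ (fderiv ℝ f) p ((0:ℝ), (0:Fin 3 → ℝ), Pi.single 0 1) ((0:ℝ), (0:Fin 3 → ℝ), Pi.single 1 1) := sF _ _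
  have h6b : fderiv ℝ (fderiv ℝ f) p ((0:ℝ), (0:Fin 3 → ℝ), Pi.single 2 1) ((0:ℝ), (0:Fin 3 → ℝ), Pi.single 0 1)
      = fderiv ℝ (fderiv ℝ f) p ((0:ℝ), (0:Fin 3 → ℝ), Pi.single 0 1) ((0:ℝ), (0:Fin 3 → ℝ), Pi.single 2 1) := sF _ _
  have h6c : fderiv ℝ (fderiv ℝ f) p ((0:ℝ), (0:Fin 3 → ℝ), Pi.single 2 1) ((0:ℝ), (0:Fin 3 → ℝ), Pi.single 1 1)
      = fderiv ℝ (fderiv ℝ f) p ((0:ℝ), (0:Fin 3 → ℝ), Pi.single 1 1) ((0:ℝ), (0:Fin 3 → ℝ), Pi.single 2 1) := sF _ _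
  simp only [h6a, h6b, h6c]
  have hv0 : vzero p.2.2 ≠ 0 := (vzero_pos p.2.2).ne'
  have hsq : vzero p.2.2 ^ 2 = 1 + (p.2.2 0 ^ 2 + p.2.2 1 ^ 2 + p.2.2 2 ^ 2) := by
    rw [vzero_sq]; simp [Fin.sum_univ_three]
  simp only [Finset.sum_ite_eq', Finset.mem_univ, ite_true, if_true, reduceIte]
  simp only [Fin.reduceEq, reduceIte, ite_true, ite_false, mul_zero, zero_mul, sub_zero,
    add_zero, zero_add, neg_zero, mul_one]
  linear_combination (norm := (field_simp; ring1)) (-(fderiv ℝ φ (p.1, p.2.1) d *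
      (fderiv ℝ f p ((1:ℝ), (0 : (Fin 3 → ℝ) × (Fin 3 → ℝ)))
        - fderiv ℝ φ (p.1, p.2.1) ((1:ℝ), (0:Fin 3 → ℝ)) *
          (p.2.2 0 * fderiv ℝ f p ((0:ℝ), (0:Fin 3 → ℝ), Pi.single 0 1)
            + p.2.2 1 * fderiv ℝ f p ((0:ℝ), (0:Fin 3 → ℝ), Pi.single 1 1)
            + p.2.2 2 * fderiv ℝ f p ((0:ℝ), (0:Fin 3 → ℝ), Pi.single 2 1)))) / vzero p.2.2) * hsq

end AuxCommutator

/-- Lemma 3.1, first identity: commutator of the perturbed transport operator `𝐓_φ`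
with a generalized translation `𝐞_μ`, for `μ ∈ {0,1,2,3}`. -/
theorem commutator_Tpert_generalizedTranslation
    (φ : ℝ × (Fin 3 → ℝ) → ℝ) (hφ : ContDiff ℝ (⊤ : ℕ∞) φ)
    (f : Pt → ℝ) (hf : ContDiff ℝ (⊤ : ℕ∞) f) (μ : Fin 4) (p : Pt) :
    Tpert φ (eop φ (dir4 μ) f) p - eop φ (dir4 μ) (Tpert φ f) p =
      (∑ i, Dphi (fun q => Dphi φ ((0 : ℝ), Pi.single i 1) q) (dir4 μ) (p.1, p.2.1)
          * Vop i f p)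
      + Dphi φ (dir4 μ) (p.1, p.2.1) *
          (-(1 / vzero p.2.2) * eop φ ((1 : ℝ), (0 : Fin 3 → ℝ)) f p + Tpert φ f p
            + 2 * ∑ i, Dphi φ ((0 : ℝ), Pi.single i 1) (p.1, p.2.1) * Vop i f p) :=
  key φ hφ f hf (dir4 μ) p
end
end

section
/- Commutator of the perturbed transport operator with the radial vertical field (Lemma 3.1, third identity): for every smooth f(t,x,v), [𝐓_φ, W] f = (1/v⁰)·𝐞_0 f − 𝐓_φ f − 2 (∂_{xⁱ}φ)·V_i f. -/
noncomputable section

open ContinuousLinearMap in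
def coordL (i : Fin 3) : Pt →L[ℝ] ℝ :=
  (proj i).comp ((snd ℝ (Fin 3 → ℝ) (Fin 3 → ℝ)).comp (snd ℝ ℝ ((Fin 3 → ℝ) × (Fin 3 → ℝ))))

def piTX : Pt →L[ℝ] ℝ × (Fin 3 → ℝ) :=
  (ContinuousLinearMap.fst ℝ ℝ _).prod
    ((ContinuousLinearMap.fst ℝ (Fin 3 → ℝ) (Fin 3 → ℝ)).comp (ContinuousLinearMap.snd ℝ ℝ _))

@[simp] lemma coordL_apply (i : Fin 3) (q : Pt) : coordL i q = q.2.2 i := rfl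
@[simp] lemma piTX_apply (q : Pt) : piTX q = (q.1, q.2.1) := rfl

variable {E : Type*} [NormedAddCommGroup E] [NormedSpace ℝ E]

lemma hasfd_fd (f : E → ℝ) (hf : ContDiff ℝ (⊤ : ℕ∞) f) (p : E) :
    HasFDerivAt (fderiv ℝ f) (fderiv ℝ (fderiv ℝ f) p) p :=
  (((hf.fderiv_right (m := (⊤:ℕ∞)) (by simp)).differentiable (by simp)) p).hasFDerivAt

lemma symm2 (f : E → ℝ) (hf : ContDiff ℝ (⊤ : ℕ∞) f) (p : E) (v w : E) :
    fderiv ℝ (fderiv ℝ f) p v w = fderiv ℝ (fderiv ℝ f) p w v :=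
  (hf.contDiffAt.isSymmSndFDerivAt (by rw [minSmoothness_of_isRCLikeNormedField]; exact WithTop.coe_le_coe.2 le_top)) v w

lemma hasfd_D1 (f : Pt → ℝ) (hf : ContDiff ℝ (⊤ : ℕ∞) f) (u : Pt) (p : Pt) :
    HasFDerivAt (fun q => fderiv ℝ f q u)
      ((fderiv ℝ f p).comp (0 : Pt →L[ℝ] Pt) + (fderiv ℝ (fderiv ℝ f) p).flip u) p := by
  simpa using (hasfd_fd f hf p).clm_apply (hasFDerivAt_const u p)

lemma hasfd_P (φ : ℝ × (Fin 3 → ℝ) → ℝ) (hφ : ContDiff ℝ (⊤ : ℕ∞) φ)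
    (u : ℝ × (Fin 3 → ℝ)) (p : Pt) :
    HasFDerivAt (fun q : Pt => fderiv ℝ φ (piTX q) u)
      ((((fderiv ℝ φ (piTX p)).comp (0 : (ℝ × (Fin 3 → ℝ)) →L[ℝ] (ℝ × (Fin 3 → ℝ))) +
        (fderiv ℝ (fderiv ℝ φ) (piTX p)).flip u)).comp piTX) p :=
  ((hasfd_fd φ hφ (piTX p)).clm_apply (hasFDerivAt_const u (piTX p))).comp p (piTX.hasFDerivAt)

lemma hasfd_vz (p : Pt) :
    HasFDerivAt (fun q : Pt => vzero q.2.2)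
      ((1 / (2 * vzero p.2.2)) • ∑ i : Fin 3, ((2 : ℝ) * p.2.2 i ^ 1) • coordL i) p := by
  have hs : (1 + ∑ i, (p.2.2 i) ^ 2) ≠ 0 := by positivity
  have hinner : HasFDerivAt (fun q : Pt => 1 + ∑ i, (q.2.2 i) ^ 2)
      (∑ i : Fin 3, ((2 : ℝ) * p.2.2 i ^ 1) • coordL i) p := by
    have : HasFDerivAt (fun q : Pt => ∑ i, (q.2.2 i) ^ 2)
        (∑ i : Fin 3, ((2 : ℝ) * p.2.2 i ^ 1) • coordL i) p := by
      apply HasFDerivAt.fun_sum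
      intro i _
      have := ((coordL i).hasFDerivAt (x := p)).mul ((coordL i).hasFDerivAt (x := p))
      simpa [sq, two_mul, add_smul, Pi.mul_def] using this
    simpa using this.const_add 1
  have := (Real.hasDerivAt_sqrt hs).comp_hasFDerivAt p hinner
  simpa [vzero, Function.comp_def] using this

lemma fderiv_Wop_apply (f : Pt → ℝ) (hf : ContDiff ℝ (⊤ : ℕ∞) f) (p d : Pt) :
    fderiv ℝ (Wop f) p d =
      ∑ i, (d.2.2 i * fderiv ℝ f p ((0:ℝ), (0 : Fin 3 → ℝ), Pi.single i 1)
        + p.2.2 i * fderiv ℝ (fderiv ℝ f) p d ((0:ℝ), (0 : Fin 3 → ℝ), Pi.single i 1)) := by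
  have hW := HasFDerivAt.sum (u := Finset.univ) (fun i (_ : i ∈ Finset.univ) =>
    HasFDerivAt.mul ((coordL i).hasFDerivAt (x := p))
      (hasfd_D1 f hf ((0:ℝ), (0 : Fin 3 → ℝ), Pi.single i 1) p))
  rw [(show HasFDerivAt (Wop f) _ p from hW).fderiv]
  simp only [ContinuousLinearMap.coe_sum', Finset.sum_apply, ContinuousLinearMap.add_apply,
    ContinuousLinearMap.smul_apply, ContinuousLinearMap.coe_comp', Function.comp_apply,
    ContinuousLinearMap.zero_apply, map_zero, ContinuousLinearMap.flip_apply, smul_eq_mul,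
    coordL_apply, zero_add]
  exact Finset.sum_congr rfl fun i _ => by ring

lemma sq_vzero (v : Fin 3 → ℝ) : vzero v ^ 2 = 1 + ∑ i, (v i) ^ 2 := by
  rw [vzero, Real.sq_sqrt]; positivity


set_option maxHeartbeats 1000000 in
/-- Lemma 3.1, third identity: `[𝐓_φ, W] f = (1/v⁰)·𝐞_0 f − 𝐓_φ f − 2(∂_{xⁱ}φ)·V_i f`. -/
theorem commutator_Tpert_W
    (φ : ℝ × (Fin 3 → ℝ) → ℝ) (hφ : ContDiff ℝ (⊤ : ℕ∞) φ)
    (f : Pt → ℝ) (hf : ContDiff ℝ (⊤ : ℕ∞) f) (p : Pt) :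
    Tpert φ (Wop f) p - Wop (Tpert φ f) p =
      (1 / vzero p.2.2) * eop φ ((1 : ℝ), (0 : Fin 3 → ℝ)) f p
        - Tpert φ f p
        - 2 * ∑ i, Dphi φ ((0 : ℝ), Pi.single i 1) (p.1, p.2.1) * Vop i f p := by
  have hTphi : HasFDerivAt (TphiFn φ) _ p :=
    ((hasfd_vz p).mul (hasfd_P φ hφ ((1:ℝ), (0 : Fin 3 → ℝ)) p)).add
      (HasFDerivAt.sum fun i (_ : i ∈ Finset.univ) =>
        ((coordL i).hasFDerivAt (x := p)).mul (hasfd_P φ hφ ((0:ℝ), Pi.single i 1) p))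
  have hT : HasFDerivAt (Tpert φ f) _ p :=
    (((hasfd_vz p).mul (hasfd_D1 f hf ((1:ℝ), (0:Fin 3 → ℝ), (0:Fin 3 → ℝ)) p)).add
      (HasFDerivAt.sum fun i (_ : i ∈ Finset.univ) =>
        ((coordL i).hasFDerivAt (x := p)).mul
          (hasfd_D1 f hf ((0:ℝ), Pi.single i 1, (0:Fin 3 → ℝ)) p))).sub
      (HasFDerivAt.sum fun i (_ : i ∈ Finset.univ) =>
        ((hTphi.mul ((coordL i).hasFDerivAt (x := p))).add
          (hasfd_P φ hφ ((0:ℝ), Pi.single i 1) p)).mul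
          (hasfd_D1 f hf ((0:ℝ), (0:Fin 3 → ℝ), Pi.single i 1) p))
  simp only [Tpert, Tfree, Wop, eop, TphiFn, Vop]
  simp only [fderiv_Wop_apply f hf p, hT.fderiv]
  simp only [Pi.add_apply, Pi.mul_apply]
  simp only [ContinuousLinearMap.coe_sum', Finset.sum_apply, ContinuousLinearMap.add_apply,
    ContinuousLinearMap.smul_apply, ContinuousLinearMap.coe_comp', Function.comp_apply,
    ContinuousLinearMap.zero_apply, map_zero, ContinuousLinearMap.flip_apply, smul_eq_mul,
    ContinuousLinearMap.sub_apply, coordL_apply, piTX_apply, zero_add, Dphi, Vop,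
    Prod.mk_zero_zero, Pi.zero_apply, zero_mul, mul_zero, pow_one, add_zero]
  have hsym := symm2 f hf p
  have h1 : ∀ k : Fin 3, fderiv ℝ (fderiv ℝ f) p ((0:ℝ), (0:Fin 3 → ℝ), Pi.single k 1) ((1:ℝ), (0 : (Fin 3 → ℝ) × (Fin 3 → ℝ)))
      = fderiv ℝ (fderiv ℝ f) p ((1:ℝ), (0 : (Fin 3 → ℝ) × (Fin 3 → ℝ))) ((0:ℝ), (0:Fin 3 → ℝ), Pi.single k 1) :=
    fun k => hsym _ _
  have h2 : ∀ k j : Fin 3, fderiv ℝ (fderiv ℝ f) p ((0:ℝ), (0:Fin 3 → ℝ), Pi.single k 1) ((0:ℝ), Pi.single j 1, (0:Fin 3 → ℝ))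
      = fderiv ℝ (fderiv ℝ f) p ((0:ℝ), Pi.single j 1, (0:Fin 3 → ℝ)) ((0:ℝ), (0:Fin 3 → ℝ), Pi.single k 1) :=
    fun k j => hsym _ _
  have h3 : ∀ k j : Fin 3, fderiv ℝ (fderiv ℝ f) p ((0:ℝ), (0:Fin 3 → ℝ), Pi.single k 1) ((0:ℝ), (0:Fin 3 → ℝ), Pi.single j 1)
      = fderiv ℝ (fderiv ℝ f) p ((0:ℝ), (0:Fin 3 → ℝ), Pi.single j 1) ((0:ℝ), (0:Fin 3 → ℝ), Pi.single k 1) :=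
    fun k j => hsym _ _
  simp only [h1, h2]
  simp only [Fin.sum_univ_three]
  simp only [Pi.single_apply, Fin.isValue, Fin.reduceEq, if_true, if_false, reduceIte, mul_one,
    one_mul, mul_zero, zero_mul, add_zero, zero_add]
  rw [h3 1 0, h3 2 0, h3 2 1]
  simp only [TphiFn, Dphi, Fin.sum_univ_three]
  have hv0 : vzero p.2.2 ≠ 0 := ne_of_gt (vzero_pos p.2.2)
  have hv : vzero p.2.2 ^ 2 = 1 + (p.2.2 0 ^ 2 + p.2.2 1 ^ 2 + p.2.2 2 ^ 2) := by
    rw [sq_vzero, Fin.sum_univ_three]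
  set vz := vzero p.2.2 with hvz
  set v0 := p.2.2 0 with hv0
  set v1 := p.2.2 1 with hv1
  set v2 := p.2.2 2 with hv2
  set A0 := (fderiv ℝ f p) ((1:ℝ), (0 : (Fin 3 → ℝ) × (Fin 3 → ℝ))) with hA0
  set Ax0 := (fderiv ℝ f p) ((0:ℝ), Pi.single 0 1, (0:Fin 3 → ℝ)) with hAx0
  set Av0 := (fderiv ℝ f p) ((0:ℝ), (0:Fin 3 → ℝ), Pi.single 0 1) with hAv0
  set Ax1 := (fderiv ℝ f p) ((0:ℝ), Pi.single 1 1, (0:Fin 3 → ℝ)) with hAx1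
  set Av1 := (fderiv ℝ f p) ((0:ℝ), (0:Fin 3 → ℝ), Pi.single 1 1) with hAv1
  set Ax2 := (fderiv ℝ f p) ((0:ℝ), Pi.single 2 1, (0:Fin 3 → ℝ)) with hAx2
  set Av2 := (fderiv ℝ f p) ((0:ℝ), (0:Fin 3 → ℝ), Pi.single 2 1) with hAv2
  set B00 := (fderiv ℝ (fderiv ℝ f) p) ((1:ℝ), (0 : (Fin 3 → ℝ) × (Fin 3 → ℝ))) ((0:ℝ), (0:Fin 3 → ℝ), Pi.single 0 1) with hB00
  set B01 := (fderiv ℝ (fderiv ℝ f) p) ((1:ℝ), (0 : (Fin 3 → ℝ) × (Fin 3 → ℝ))) ((0:ℝ), (0:Fin 3 → ℝ), Pi.single 1 1) with hB01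
  set B02 := (fderiv ℝ (fderiv ℝ f) p) ((1:ℝ), (0 : (Fin 3 → ℝ) × (Fin 3 → ℝ))) ((0:ℝ), (0:Fin 3 → ℝ), Pi.single 2 1) with hB02
  set Bx00 := (fderiv ℝ (fderiv ℝ f) p) ((0:ℝ), Pi.single 0 1, (0:Fin 3 → ℝ)) ((0:ℝ), (0:Fin 3 → ℝ), Pi.single 0 1) with hBx00
  set Bx01 := (fderiv ℝ (fderiv ℝ f) p) ((0:ℝ), Pi.single 0 1, (0:Fin 3 → ℝ)) ((0:ℝ), (0:Fin 3 → ℝ), Pi.single 1 1) with hBx01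
  set Bx02 := (fderiv ℝ (fderiv ℝ f) p) ((0:ℝ), Pi.single 0 1, (0:Fin 3 → ℝ)) ((0:ℝ), (0:Fin 3 → ℝ), Pi.single 2 1) with hBx02
  set Bx10 := (fderiv ℝ (fderiv ℝ f) p) ((0:ℝ), Pi.single 1 1, (0:Fin 3 → ℝ)) ((0:ℝ), (0:Fin 3 → ℝ), Pi.single 0 1) with hBx10
  set Bx11 := (fderiv ℝ (fderiv ℝ f) p) ((0:ℝ), Pi.single 1 1, (0:Fin 3 → ℝ)) ((0:ℝ), (0:Fin 3 → ℝ), Pi.single 1 1) with hBx11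
  set Bx12 := (fderiv ℝ (fderiv ℝ f) p) ((0:ℝ), Pi.single 1 1, (0:Fin 3 → ℝ)) ((0:ℝ), (0:Fin 3 → ℝ), Pi.single 2 1) with hBx12
  set Bx20 := (fderiv ℝ (fderiv ℝ f) p) ((0:ℝ), Pi.single 2 1, (0:Fin 3 → ℝ)) ((0:ℝ), (0:Fin 3 → ℝ), Pi.single 0 1) with hBx20
  set Bx21 := (fderiv ℝ (fderiv ℝ f) p) ((0:ℝ), Pi.single 2 1, (0:Fin 3 → ℝ)) ((0:ℝ), (0:Fin 3 → ℝ), Pi.single 1 1) with hBx21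
  set Bx22 := (fderiv ℝ (fderiv ℝ f) p) ((0:ℝ), Pi.single 2 1, (0:Fin 3 → ℝ)) ((0:ℝ), (0:Fin 3 → ℝ), Pi.single 2 1) with hBx22
  set Bv00 := (fderiv ℝ (fderiv ℝ f) p) ((0:ℝ), (0:Fin 3 → ℝ), Pi.single 0 1) ((0:ℝ), (0:Fin 3 → ℝ), Pi.single 0 1) with hBv00
  set Bv01 := (fderiv ℝ (fderiv ℝ f) p) ((0:ℝ), (0:Fin 3 → ℝ), Pi.single 0 1) ((0:ℝ), (0:Fin 3 → ℝ), Pi.single 1 1) with hBv01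
  set Bv02 := (fderiv ℝ (fderiv ℝ f) p) ((0:ℝ), (0:Fin 3 → ℝ), Pi.single 0 1) ((0:ℝ), (0:Fin 3 → ℝ), Pi.single 2 1) with hBv02
  set Bv11 := (fderiv ℝ (fderiv ℝ f) p) ((0:ℝ), (0:Fin 3 → ℝ), Pi.single 1 1) ((0:ℝ), (0:Fin 3 → ℝ), Pi.single 1 1) with hBv11
  set Bv12 := (fderiv ℝ (fderiv ℝ f) p) ((0:ℝ), (0:Fin 3 → ℝ), Pi.single 1 1) ((0:ℝ), (0:Fin 3 → ℝ), Pi.single 2 1) with hBv12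
  set Bv22 := (fderiv ℝ (fderiv ℝ f) p) ((0:ℝ), (0:Fin 3 → ℝ), Pi.single 2 1) ((0:ℝ), (0:Fin 3 → ℝ), Pi.single 2 1) with hBv22
  set P0 := (fderiv ℝ φ (p.1, p.2.1)) ((1:ℝ), (0:Fin 3 → ℝ)) with hP0
  set Px0 := (fderiv ℝ φ (p.1, p.2.1)) ((0:ℝ), Pi.single 0 1) with hPx0
  set Px1 := (fderiv ℝ φ (p.1, p.2.1)) ((0:ℝ), Pi.single 1 1) with hPx1
  set Px2 := (fderiv ℝ φ (p.1, p.2.1)) ((0:ℝ), Pi.single 2 1) with hPx2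
  field_simp
  linear_combination (A0 - P0 * (v0 * Av0 + v1 * Av1 + v2 * Av2)) * hv
end
end

section
/- Mutual commutators of the basic vector fields (Lemma 3.2): for all indices α, β ∈ {0,1,2,3}, i, j ∈ {1,2,3} and every smooth f(t,x,v): (i) [𝐞_α, 𝐞_β] f = 0; (ii) [V_i, V_j] f = 0; (iii) [V_i, 𝐞_α] f = −(∂_{x^α}φ)·V_i f; (iv) [W, 𝐞_α] f = 0; (v) [V_i, W] f = V_i f. -/
noncomputable section

namespace MCAux

/-- Vertical coordinate direction, as a phase-space vector. -/
def εv (i : Fin 3) : Pt := ((0 : ℝ), (0 : Fin 3 → ℝ), Pi.single i 1)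

/-- Horizontal embedding of a spacetime direction. -/
def ιh (d : ℝ × (Fin 3 → ℝ)) : Pt := (d.1, d.2, (0 : Fin 3 → ℝ))

lemma top1 : ((⊤ : ℕ∞) : WithTop ℕ∞) + 1 ≤ ((⊤ : ℕ∞) : WithTop ℕ∞) := by simp

lemma one_le_top : (1 : WithTop ℕ∞) ≤ ((⊤ : ℕ∞) : WithTop ℕ∞) := by simp

lemma two_le_top : (2 : WithTop ℕ∞) ≤ ((⊤ : ℕ∞) : WithTop ℕ∞) := by
  rw [show ((2 : WithTop ℕ∞)) = ((2 : ℕ∞) : WithTop ℕ∞) from rfl, WithTop.coe_le_coe]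
  exact le_top

variable {E : Type*} [NormedAddCommGroup E] [NormedSpace ℝ E]

/-- Derivative in a fixed direction is again smooth. -/
lemma smooth_D {f : E → ℝ} (hf : ContDiff ℝ (⊤ : ℕ∞) f) (u : E) :
    ContDiff ℝ (⊤ : ℕ∞) (fun p => fderiv ℝ f p u) :=
  (hf.fderiv_right top1).clm_apply contDiff_const

lemma diff_D {f : E → ℝ} (hf : ContDiff ℝ (⊤ : ℕ∞) f) (u : E) (p : E) :
    DifferentiableAt ℝ (fun q => fderiv ℝ f q u) p :=
  ((smooth_D hf u).differentiable (by simp)).differentiableAt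

lemma fderiv_D {f : E → ℝ} (hf : ContDiff ℝ (⊤ : ℕ∞) f) (u w p : E) :
    fderiv ℝ (fun q => fderiv ℝ f q u) p w = fderiv ℝ (fderiv ℝ f) p w u := by
  have hd : DifferentiableAt ℝ (fderiv ℝ f) p :=
    ((hf.fderiv_right top1).differentiable (by simp)).differentiableAt
  have h := ((ContinuousLinearMap.apply ℝ ℝ u).hasFDerivAt.comp p hd.hasFDerivAt).fderiv
  have he : (fun q => fderiv ℝ f q u) =
      (ContinuousLinearMap.apply ℝ ℝ u) ∘ (fderiv ℝ f) := rfl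
  rw [he, h]; rfl

/-- Clairaut for directional derivatives. -/
lemma symm_D {f : E → ℝ} (hf : ContDiff ℝ (⊤ : ℕ∞) f) (u w p : E) :
    fderiv ℝ (fun q => fderiv ℝ f q u) p w = fderiv ℝ (fun q => fderiv ℝ f q w) p u := by
  rw [fderiv_D hf, fderiv_D hf]
  exact (hf.contDiffAt.isSymmSndFDerivAt (by rw [minSmoothness_of_isRCLikeNormedField]; exact two_le_top)) w u

/-- Product rule for directional derivatives. -/
lemma fderiv_mul_apply {g h : E → ℝ} {p : E} (hg : DifferentiableAt ℝ g p)
    (hh : DifferentiableAt ℝ h p) (u : E) :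
    fderiv ℝ (fun q => g q * h q) p u = fderiv ℝ g p u * h p + g p * fderiv ℝ h p u := by
  rw [fderiv_fun_mul hg hh]
  simp only [ContinuousLinearMap.add_apply, ContinuousLinearMap.smul_apply, smul_eq_mul]
  ring

variable {φ : ℝ × (Fin 3 → ℝ) → ℝ} {f : Pt → ℝ}

lemma Vop_eq (i : Fin 3) (f : Pt → ℝ) : Vop i f = fun p => fderiv ℝ f p (εv i) := rfl

lemma smooth_Vop (hf : ContDiff ℝ (⊤ : ℕ∞) f) (i : Fin 3) :
    ContDiff ℝ (⊤ : ℕ∞) (Vop i f) := smooth_D hf (εv i)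

lemma smooth_coord (k : Fin 3) : ContDiff ℝ (⊤ : ℕ∞) (fun q : Pt => q.2.2 k) := by fun_prop

/-- The coordinate function as a continuous linear map. -/
def coordL (k : Fin 3) : Pt →L[ℝ] ℝ :=
  (ContinuousLinearMap.proj k).comp
    ((ContinuousLinearMap.snd ℝ (Fin 3 → ℝ) (Fin 3 → ℝ)).comp
      (ContinuousLinearMap.snd ℝ ℝ ((Fin 3 → ℝ) × (Fin 3 → ℝ))))

lemma fderiv_coord (k : Fin 3) (p u : Pt) :
    fderiv ℝ (fun q : Pt => q.2.2 k) p u = u.2.2 k := by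
  rw [show (fun q : Pt => q.2.2 k) = (coordL k : Pt → ℝ) from rfl, (coordL k).fderiv]
  rfl

lemma smooth_Wop (hf : ContDiff ℝ (⊤ : ℕ∞) f) : ContDiff ℝ (⊤ : ℕ∞) (Wop f) := by
  have : Wop f = fun q => ∑ k, q.2.2 k * Vop k f q := rfl
  rw [this]
  exact ContDiff.sum fun k _ => (smooth_coord k).mul (smooth_Vop hf k)

lemma diff_Wop (hf : ContDiff ℝ (⊤ : ℕ∞) f) (p : Pt) : DifferentiableAt ℝ (Wop f) p :=
  ((smooth_Wop hf).differentiable (by simp)).differentiableAt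

/-- The projection onto spacetime, as a continuous linear map. -/
def piL : Pt →L[ℝ] (ℝ × (Fin 3 → ℝ)) :=
  (ContinuousLinearMap.fst ℝ ℝ ((Fin 3 → ℝ) × (Fin 3 → ℝ))).prod
    ((ContinuousLinearMap.fst ℝ (Fin 3 → ℝ) (Fin 3 → ℝ)).comp
      (ContinuousLinearMap.snd ℝ ℝ ((Fin 3 → ℝ) × (Fin 3 → ℝ))))

lemma smooth_Cf (hφ : ContDiff ℝ (⊤ : ℕ∞) φ) (d : ℝ × (Fin 3 → ℝ)) :
    ContDiff ℝ (⊤ : ℕ∞) (fun q : Pt => Dphi φ d (q.1, q.2.1)) :=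
  (smooth_D hφ d).comp (piL.contDiff)

lemma fderiv_Cf (hφ : ContDiff ℝ (⊤ : ℕ∞) φ) (d : ℝ × (Fin 3 → ℝ)) (p u : Pt) :
    fderiv ℝ (fun q : Pt => Dphi φ d (q.1, q.2.1)) p u =
      fderiv ℝ (fun q => fderiv ℝ φ q d) (p.1, p.2.1) (u.1, u.2.1) := by
  have hg : DifferentiableAt ℝ (fun q => fderiv ℝ φ q d) (piL p) := diff_D hφ d _
  have h := (hg.hasFDerivAt.comp p piL.hasFDerivAt).fderiv
  have he : (fun q : Pt => Dphi φ d (q.1, q.2.1)) =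
      (fun q => fderiv ℝ φ q d) ∘ (piL : Pt → ℝ × (Fin 3 → ℝ)) := rfl
  rw [he, h]; rfl

lemma fderiv_Cf_vert (hφ : ContDiff ℝ (⊤ : ℕ∞) φ) (d : ℝ × (Fin 3 → ℝ)) (p : Pt)
    (i : Fin 3) : fderiv ℝ (fun q : Pt => Dphi φ d (q.1, q.2.1)) p (εv i) = 0 := by
  rw [fderiv_Cf hφ]
  exact (fderiv ℝ (fun q => fderiv ℝ φ q d) (p.1, p.2.1)).map_zero

lemma fderiv_Cf_horiz (hφ : ContDiff ℝ (⊤ : ℕ∞) φ) (d e : ℝ × (Fin 3 → ℝ)) (p : Pt) :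
    fderiv ℝ (fun q : Pt => Dphi φ e (q.1, q.2.1)) p (ιh d) =
      fderiv ℝ (fun q : Pt => Dphi φ d (q.1, q.2.1)) p (ιh e) := by
  rw [fderiv_Cf hφ, fderiv_Cf hφ]
  exact symm_D hφ e d (p.1, p.2.1)

/-- Expansion of the derivative of `W f`. -/
lemma fderiv_Wop_apply (hf : ContDiff ℝ (⊤ : ℕ∞) f) (p u : Pt) :
    fderiv ℝ (Wop f) p u =
      (∑ k, u.2.2 k * Vop k f p) + ∑ k, p.2.2 k * fderiv ℝ (Vop k f) p u := by
  have h1 : Wop f = fun q => ∑ k, q.2.2 k * Vop k f q := rfl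
  have hdk : ∀ k : Fin 3, DifferentiableAt ℝ (Vop k f) p := fun k => diff_D hf (εv k) p
  have hck : ∀ k : Fin 3, DifferentiableAt ℝ (fun q : Pt => q.2.2 k) p := fun k =>
    ((smooth_coord k).differentiable (by simp)).differentiableAt
  rw [h1, fderiv_fun_sum (fun k _ => ((hck k).fun_mul (hdk k)))]
  rw [ContinuousLinearMap.sum_apply]
  rw [← Finset.sum_add_distrib]
  refine Finset.sum_congr rfl fun k _ => ?_
  rw [fderiv_mul_apply (hck k) (hdk k), fderiv_coord]

lemma Vop_Vop (hf : ContDiff ℝ (⊤ : ℕ∞) f) (i k : Fin 3) (p : Pt) :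
    Vop i (Vop k f) p = Vop k (Vop i f) p := by
  rw [Vop_eq k f, Vop_eq i f]
  exact symm_D hf (εv k) (εv i) p

/-- Part (v): `[V_i, W] f = V_i f`. -/
lemma Vop_Wop (hf : ContDiff ℝ (⊤ : ℕ∞) f) (i : Fin 3) (p : Pt) :
    Vop i (Wop f) p = Vop i f p + Wop (Vop i f) p := by
  have h : Vop i (Wop f) p = fderiv ℝ (Wop f) p (εv i) := rfl
  rw [h, fderiv_Wop_apply hf]
  congr 1
  · simp only [εv, Pi.single_apply]
    simp [Finset.sum_ite_eq]
  · refine Finset.sum_congr rfl fun k _ => ?_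
    congr 1
    exact Vop_Vop hf i k p

lemma fderiv_Wop_horiz (hf : ContDiff ℝ (⊤ : ℕ∞) f) (d : ℝ × (Fin 3 → ℝ)) (p : Pt) :
    fderiv ℝ (Wop f) p (ιh d) = ∑ k, p.2.2 k * fderiv ℝ (Vop k f) p (ιh d) := by
  rw [fderiv_Wop_apply hf]
  simp [ιh]

lemma eop_eq (d : ℝ × (Fin 3 → ℝ)) :
    eop φ d f = fun q => fderiv ℝ f q (ιh d) - Dphi φ d (q.1, q.2.1) * Wop f q := rfl

lemma diff_eop (hφ : ContDiff ℝ (⊤ : ℕ∞) φ) (hf : ContDiff ℝ (⊤ : ℕ∞) f)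
    (d : ℝ × (Fin 3 → ℝ)) (p : Pt) : DifferentiableAt ℝ (eop φ d f) p := by
  rw [eop_eq]
  exact (diff_D hf (ιh d) p).sub
    ((((smooth_Cf hφ d).differentiable (by simp)).differentiableAt).mul (diff_Wop hf p))

/-- Derivative of `e_d f` in any direction. -/
lemma fderiv_eop_apply (hφ : ContDiff ℝ (⊤ : ℕ∞) φ) (hf : ContDiff ℝ (⊤ : ℕ∞) f)
    (d : ℝ × (Fin 3 → ℝ)) (p u : Pt) :
    fderiv ℝ (eop φ d f) p u =
      fderiv ℝ (fun q => fderiv ℝ f q (ιh d)) p u -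
        (fderiv ℝ (fun q : Pt => Dphi φ d (q.1, q.2.1)) p u * Wop f p +
          Dphi φ d (p.1, p.2.1) * fderiv ℝ (Wop f) p u) := by
  have hc : DifferentiableAt ℝ (fun q : Pt => Dphi φ d (q.1, q.2.1)) p :=
    (((smooth_Cf hφ d).differentiable (by simp)).differentiableAt)
  rw [eop_eq, fderiv_fun_sub (diff_D hf (ιh d) p) (hc.fun_mul (diff_Wop hf p))]
  rw [ContinuousLinearMap.sub_apply, fderiv_mul_apply hc (diff_Wop hf p)]

/-- `V_i (e_d f)` expanded. -/
lemma Vop_eop (hφ : ContDiff ℝ (⊤ : ℕ∞) φ) (hf : ContDiff ℝ (⊤ : ℕ∞) f)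
    (d : ℝ × (Fin 3 → ℝ)) (i : Fin 3) (p : Pt) :
    Vop i (eop φ d f) p =
      fderiv ℝ (Vop i f) p (ιh d) -
        Dphi φ d (p.1, p.2.1) * (Vop i f p + Wop (Vop i f) p) := by
  have h : Vop i (eop φ d f) p = fderiv ℝ (eop φ d f) p (εv i) := rfl
  rw [h, fderiv_eop_apply hφ hf, fderiv_Cf_vert hφ]
  have h2 : fderiv ℝ (Wop f) p (εv i) = Vop i (Wop f) p := rfl
  rw [h2, Vop_Wop hf]
  have h3 : fderiv ℝ (fun q => fderiv ℝ f q (ιh d)) p (εv i) =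
      fderiv ℝ (Vop i f) p (ιh d) := by
    rw [symm_D hf (ιh d) (εv i) p, Vop_eq]
  rw [h3]
  ring

/-- `W (e_d f)` expanded. -/
lemma Wop_eop (hφ : ContDiff ℝ (⊤ : ℕ∞) φ) (hf : ContDiff ℝ (⊤ : ℕ∞) f)
    (d : ℝ × (Fin 3 → ℝ)) (p : Pt) :
    Wop (eop φ d f) p =
      (∑ k, p.2.2 k * fderiv ℝ (Vop k f) p (ιh d)) -
        Dphi φ d (p.1, p.2.1) * (Wop f p + ∑ k, p.2.2 k * Wop (Vop k f) p) := by
  have h : Wop (eop φ d f) p = ∑ k, p.2.2 k * Vop k (eop φ d f) p := rfl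
  rw [h]
  have h2 : ∀ k : Fin 3, p.2.2 k * Vop k (eop φ d f) p =
      p.2.2 k * fderiv ℝ (Vop k f) p (ιh d) -
        Dphi φ d (p.1, p.2.1) * (p.2.2 k * Vop k f p) -
        Dphi φ d (p.1, p.2.1) * (p.2.2 k * Wop (Vop k f) p) := by
    intro k
    rw [Vop_eop hφ hf]
    ring
  rw [Finset.sum_congr rfl fun k _ => h2 k]
  rw [Finset.sum_sub_distrib, Finset.sum_sub_distrib, ← Finset.mul_sum, ← Finset.mul_sum]
  have h4 : Wop f p = ∑ k, p.2.2 k * Vop k f p := rfl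
  rw [← h4]
  ring

end MCAux

open MCAux in
/-- Lemma 3.2: mutual commutators of the basic vector fields `𝐞_α`, `V_i`, `W`. -/
theorem mutual_commutators_basic_fields
    (φ : ℝ × (Fin 3 → ℝ) → ℝ) (hφ : ContDiff ℝ (⊤ : ℕ∞) φ)
    (f : Pt → ℝ) (hf : ContDiff ℝ (⊤ : ℕ∞) f)
    (α β : Fin 4) (i j : Fin 3) (p : Pt) :
    (eop φ (dir4 α) (eop φ (dir4 β) f) p - eop φ (dir4 β) (eop φ (dir4 α) f) p = 0) ∧
    (Vop i (Vop j f) p - Vop j (Vop i f) p = 0) ∧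
    (Vop i (eop φ (dir4 α) f) p - eop φ (dir4 α) (Vop i f) p
      = -(Dphi φ (dir4 α) (p.1, p.2.1)) * Vop i f p) ∧
    (Wop (eop φ (dir4 α) f) p - eop φ (dir4 α) (Wop f) p = 0) ∧
    (Vop i (Wop f) p - Wop (Vop i f) p = Vop i f p) := by
  set d := dir4 α with hd
  set e := dir4 β with he
  refine ⟨?_, ?_, ?_, ?_, ?_⟩
  · -- (i) [e_d, e_e] f = 0
    have key : ∀ a b : ℝ × (Fin 3 → ℝ),
        eop φ a (eop φ b f) p =
          fderiv ℝ (fun q => fderiv ℝ f q (ιh b)) p (ιh a)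
          - fderiv ℝ (fun q : Pt => Dphi φ b (q.1, q.2.1)) p (ιh a) * Wop f p
          - Dphi φ b (p.1, p.2.1) * (∑ k, p.2.2 k * fderiv ℝ (Vop k f) p (ιh a))
          - Dphi φ a (p.1, p.2.1) * (∑ k, p.2.2 k * fderiv ℝ (Vop k f) p (ιh b))
          + Dphi φ a (p.1, p.2.1) * Dphi φ b (p.1, p.2.1) *
              (Wop f p + ∑ k, p.2.2 k * Wop (Vop k f) p) := by
      intro a b
      have h1 : eop φ a (eop φ b f) p =
          fderiv ℝ (eop φ b f) p (ιh a) - Dphi φ a (p.1, p.2.1) * Wop (eop φ b f) p := rfl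
      rw [h1, fderiv_eop_apply hφ hf, fderiv_Wop_horiz hf, Wop_eop hφ hf]
      ring
    rw [key d e, key e d]
    rw [symm_D hf (ιh e) (ιh d) p, fderiv_Cf_horiz hφ d e]
    ring
  · -- (ii)
    rw [Vop_Vop hf i j p]; ring
  · -- (iii)
    rw [Vop_eop hφ hf]
    have h1 : eop φ d (Vop i f) p =
        fderiv ℝ (Vop i f) p (ιh d) - Dphi φ d (p.1, p.2.1) * Wop (Vop i f) p := rfl
    rw [h1]
    ring
  · -- (iv)
    rw [Wop_eop hφ hf]
    have h1 : eop φ d (Wop f) p =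
        fderiv ℝ (Wop f) p (ιh d) - Dphi φ d (p.1, p.2.1) * Wop (Wop f) p := rfl
    have h3 : Wop (Wop f) p = Wop f p + ∑ k, p.2.2 k * Wop (Vop k f) p := by
      have h2 : Wop (Wop f) p = ∑ k, p.2.2 k * Vop k (Wop f) p := rfl
      have h4 : Wop f p = ∑ k, p.2.2 k * Vop k f p := rfl
      rw [h2, Finset.sum_congr rfl fun (k : Fin 3) _ => by
        rw [Vop_Wop hf k p, mul_add], Finset.sum_add_distrib, ← h4]
    rw [h1, fderiv_Wop_horiz hf, h3]
    ring
  · -- (v)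
    rw [Vop_Wop hf i p]; ring

end
end

section
/- Commutation of the rotation weights with the perturbed transport operator (Lemma 3.4, rotation case): fix i < j in {1,2,3} and let w(t,x,v) = xⁱ v^j − x^j vⁱ, the unnormalized weight associated to the rotation Ω_{ij} = xⁱ∂_{x^j} − x^j∂_{xⁱ}. Then at every point (t,x,v), 𝐓_φ(w) = −𝐓(φ)·w − ( xⁱ ∂_{x^j}φ − x^j ∂_{xⁱ}φ ), i.e. 𝐓_φ(Ω_{ij}^α v_α) = −𝐓(φ)·Ω_{ij}^α v_α − Ω_{ij}(φ). -/
noncomputable section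

lemma fderiv_w (i j : Fin 3) (p d : Pt) :
    fderiv ℝ (fun q : Pt => q.2.1 i * q.2.2 j - q.2.1 j * q.2.2 i) p d
      = d.2.1 i * p.2.2 j + p.2.1 i * d.2.2 j
        - (d.2.1 j * p.2.2 i + p.2.1 j * d.2.2 i) := by
  have hx : ∀ k : Fin 3, HasFDerivAt (fun q : Pt => q.2.1 k)
      ((ContinuousLinearMap.proj k).comp
        ((ContinuousLinearMap.fst ℝ (Fin 3 → ℝ) (Fin 3 → ℝ)).comp
          (ContinuousLinearMap.snd ℝ ℝ ((Fin 3 → ℝ) × (Fin 3 → ℝ))))) p :=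
    fun k => ((ContinuousLinearMap.proj k).comp
        ((ContinuousLinearMap.fst ℝ (Fin 3 → ℝ) (Fin 3 → ℝ)).comp
          (ContinuousLinearMap.snd ℝ ℝ ((Fin 3 → ℝ) × (Fin 3 → ℝ))))).hasFDerivAt
  have hv : ∀ k : Fin 3, HasFDerivAt (fun q : Pt => q.2.2 k)
      ((ContinuousLinearMap.proj k).comp
        ((ContinuousLinearMap.snd ℝ (Fin 3 → ℝ) (Fin 3 → ℝ)).comp
          (ContinuousLinearMap.snd ℝ ℝ ((Fin 3 → ℝ) × (Fin 3 → ℝ))))) p :=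
    fun k => ((ContinuousLinearMap.proj k).comp
        ((ContinuousLinearMap.snd ℝ (Fin 3 → ℝ) (Fin 3 → ℝ)).comp
          (ContinuousLinearMap.snd ℝ ℝ ((Fin 3 → ℝ) × (Fin 3 → ℝ))))).hasFDerivAt
  have h := (((hx i).mul (hv j)).sub ((hx j).mul (hv i)))
  rw [show fderiv ℝ (fun q : Pt => q.2.1 i * q.2.2 j - q.2.1 j * q.2.2 i) p = _ from h.fderiv]
  simp [ContinuousLinearMap.comp_apply]
  ring

/-- Lemma 3.4, rotation case: for the weight `w = xⁱ v^j − x^j vⁱ` associated to the rotation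
`Ω_{ij} = xⁱ∂_{x^j} − x^j∂_{xⁱ}` (`i < j`), one has `𝐓_φ(w) = −𝐓(φ)·w − Ω_{ij}(φ)`. -/
theorem Tpert_rotation_weight
    (φ : ℝ × (Fin 3 → ℝ) → ℝ) (hφ : ContDiff ℝ (⊤ : ℕ∞) φ)
    (i j : Fin 3) (hij : i < j) (p : Pt) :
    Tpert φ (fun q => q.2.1 i * q.2.2 j - q.2.1 j * q.2.2 i) p =
      -TphiFn φ p * (p.2.1 i * p.2.2 j - p.2.1 j * p.2.2 i)
        - (p.2.1 i * Dphi φ ((0 : ℝ), Pi.single j 1) (p.1, p.2.1)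
            - p.2.1 j * Dphi φ ((0 : ℝ), Pi.single i 1) (p.1, p.2.1)) := by
  have hV : ∀ k : Fin 3, Vop k (fun q : Pt => q.2.1 i * q.2.2 j - q.2.1 j * q.2.2 i) p
      = p.2.1 i * (Pi.single j 1 : Fin 3 → ℝ) k - p.2.1 j * (Pi.single i 1 : Fin 3 → ℝ) k := by
    intro k
    rw [Vop, fderiv_w]
    simp [Pi.single_apply, eq_comm]
  rw [Tpert, Tfree]
  rw [fderiv_w]
  simp only [hV, fderiv_w]
  simp [Fin.sum_univ_three, Pi.single_apply]
  fin_cases i <;> fin_cases j <;> simp_all <;> ring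
end
end

section
/- Commutators of boost fields built from generalized translations with generalized translations (Lemma 3.5, boost case): fix i ∈ {1,2,3} and define 𝐙_i = t·𝐞_i + xⁱ·𝐞_0 (the Lorentz boost with ordinary translations replaced by generalized translations). Then for every smooth f(t,x,v) and every j ∈ {1,2,3}: [𝐙_i, 𝐞_j] f = −δ_{ij}·𝐞_0 f and [𝐙_i, 𝐞_0] f = −𝐞_i f. -/
noncomputable section

/-- `𝐙_i = t·𝐞_i + xⁱ·𝐞_0`: the Lorentz boost with ordinary translations replaced
by generalized translations. -/
def Zb (φ : ℝ × (Fin 3 → ℝ) → ℝ) (i : Fin 3) (f : Pt → ℝ) (p : Pt) : ℝ :=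
  p.1 * eop φ ((0 : ℝ), Pi.single i 1) f p
    + p.2.1 i * eop φ ((1 : ℝ), (0 : Fin 3 → ℝ)) f p

def Dop (w : Pt) (f : Pt → ℝ) (p : Pt) : ℝ := fderiv ℝ f p w

lemma topcast : ((⊤ : ℕ∞) : WithTop ℕ∞) + 1 ≤ ((⊤ : ℕ∞) : WithTop ℕ∞) := by decide

lemma contDiff_Dop {f : Pt → ℝ} (hf : ContDiff ℝ (⊤ : ℕ∞) f) (w : Pt) :
    ContDiff ℝ (⊤ : ℕ∞) (Dop w f) := by
  have h1 : ContDiff ℝ (⊤ : ℕ∞) (fderiv ℝ f) := hf.fderiv_right topcast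
  exact (ContinuousLinearMap.apply ℝ ℝ w).contDiff.comp h1

lemma Dop_symm {f : Pt → ℝ} (hf : ContDiff ℝ (⊤ : ℕ∞) f) (w w' : Pt) (p : Pt) :
    Dop w (Dop w' f) p = Dop w' (Dop w f) p := by
  have hsym : IsSymmSndFDerivAt ℝ f p :=
    (hf.contDiffAt (x := p)).isSymmSndFDerivAt (by simp; decide)
  have hdf : DifferentiableAt ℝ (fderiv ℝ f) p :=
    ((hf.fderiv_right topcast).differentiable (by simp)) p
  have key : ∀ u v : Pt, Dop u (Dop v f) p = fderiv ℝ (fderiv ℝ f) p u v := by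
    intro u v
    have h := ((ContinuousLinearMap.apply ℝ ℝ v).hasFDerivAt).comp p hdf.hasFDerivAt
    show fderiv ℝ ((ContinuousLinearMap.apply ℝ ℝ v) ∘ fderiv ℝ f) p u = _
    rw [h.fderiv]; rfl
  rw [key, key, hsym.eq]

lemma Dop_sub {a b : Pt → ℝ} (ha : DifferentiableAt ℝ a p) (hb : DifferentiableAt ℝ b p)
    (w : Pt) : Dop w (fun q => a q - b q) p = Dop w a p - Dop w b p := by
  unfold Dop; rw [fderiv_fun_sub ha hb]; rfl

lemma Dop_mul {a b : Pt → ℝ} {p : Pt} (ha : DifferentiableAt ℝ a p) (hb : DifferentiableAt ℝ b p)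
    (w : Pt) : Dop w (fun q => a q * b q) p = Dop w a p * b p + a p * Dop w b p := by
  unfold Dop; rw [fderiv_fun_mul ha hb]
  simp [ContinuousLinearMap.add_apply, ContinuousLinearMap.smul_apply]
  ring

lemma Dop_finset_sum {ι : Type*} (s : Finset ι) {F : ι → Pt → ℝ} {p : Pt}
    (h : ∀ k ∈ s, DifferentiableAt ℝ (F k) p) (w : Pt) :
    Dop w (fun q => ∑ k ∈ s, F k q) p = ∑ k ∈ s, Dop w (F k) p := by
  unfold Dop; rw [fderiv_fun_sum h]; simp [ContinuousLinearMap.sum_apply]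

/-- coordinate CLMs -/
def cT : Pt →L[ℝ] ℝ := ContinuousLinearMap.fst ℝ ℝ ((Fin 3 → ℝ) × (Fin 3 → ℝ))

def cX (i : Fin 3) : Pt →L[ℝ] ℝ :=
  (ContinuousLinearMap.proj i).comp
    ((ContinuousLinearMap.fst ℝ (Fin 3 → ℝ) (Fin 3 → ℝ)).comp
      (ContinuousLinearMap.snd ℝ ℝ ((Fin 3 → ℝ) × (Fin 3 → ℝ))))

def cV (i : Fin 3) : Pt →L[ℝ] ℝ :=
  (ContinuousLinearMap.proj i).comp
    ((ContinuousLinearMap.snd ℝ (Fin 3 → ℝ) (Fin 3 → ℝ)).comp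
      (ContinuousLinearMap.snd ℝ ℝ ((Fin 3 → ℝ) × (Fin 3 → ℝ))))

def piL : Pt →L[ℝ] ℝ × (Fin 3 → ℝ) :=
  (ContinuousLinearMap.fst ℝ ℝ ((Fin 3 → ℝ) × (Fin 3 → ℝ))).prod
    ((ContinuousLinearMap.fst ℝ (Fin 3 → ℝ) (Fin 3 → ℝ)).comp
      (ContinuousLinearMap.snd ℝ ℝ ((Fin 3 → ℝ) × (Fin 3 → ℝ))))

lemma cT_apply (p : Pt) : cT p = p.1 := rfl
lemma cX_apply (i : Fin 3) (p : Pt) : cX i p = p.2.1 i := rfl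
lemma cV_apply (i : Fin 3) (p : Pt) : cV i p = p.2.2 i := rfl
lemma piL_apply (p : Pt) : piL p = (p.1, p.2.1) := rfl

lemma Dop_cT (w p : Pt) : Dop w (fun q : Pt => q.1) p = w.1 := by
  show Dop w (cT : Pt → ℝ) p = w.1
  unfold Dop; rw [ContinuousLinearMap.fderiv]; rfl

lemma Dop_cX (i : Fin 3) (w p : Pt) : Dop w (fun q : Pt => q.2.1 i) p = w.2.1 i := by
  show Dop w (cX i : Pt → ℝ) p = w.2.1 i
  unfold Dop; rw [ContinuousLinearMap.fderiv]; rfl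

lemma Dop_cV (i : Fin 3) (w p : Pt) : Dop w (fun q : Pt => q.2.2 i) p = w.2.2 i := by
  show Dop w (cV i : Pt → ℝ) p = w.2.2 i
  unfold Dop; rw [ContinuousLinearMap.fderiv]; rfl

section Aop
variable {φ : ℝ × (Fin 3 → ℝ) → ℝ}

/-- the coefficient function `p ↦ ∂_d φ (t,x)` -/
def Aop (φ : ℝ × (Fin 3 → ℝ) → ℝ) (d : ℝ × (Fin 3 → ℝ)) (p : Pt) : ℝ :=
  fderiv ℝ φ (p.1, p.2.1) d

lemma Aop_eq (d : ℝ × (Fin 3 → ℝ)) :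
    Aop φ d = (⇑(ContinuousLinearMap.apply ℝ ℝ d) ∘ fderiv ℝ φ) ∘ ⇑piL := rfl

lemma contDiff_Aop (hφ : ContDiff ℝ (⊤ : ℕ∞) φ) (d : ℝ × (Fin 3 → ℝ)) :
    ContDiff ℝ (⊤ : ℕ∞) (Aop φ d) := by
  rw [Aop_eq]
  exact (((ContinuousLinearMap.apply ℝ ℝ d).contDiff).comp (hφ.fderiv_right topcast)).comp
    piL.contDiff

lemma Dop_Aop (hφ : ContDiff ℝ (⊤ : ℕ∞) φ) (d : ℝ × (Fin 3 → ℝ)) (w p : Pt) :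
    Dop w (Aop φ d) p = fderiv ℝ (fderiv ℝ φ) (p.1, p.2.1) (w.1, w.2.1) d := by
  have hdφ : DifferentiableAt ℝ (fderiv ℝ φ) (piL p) :=
    ((hφ.fderiv_right topcast).differentiable (by simp)) _
  have h := (((ContinuousLinearMap.apply ℝ ℝ d).hasFDerivAt).comp (piL p)
    hdφ.hasFDerivAt).comp p piL.hasFDerivAt
  rw [Dop, Aop_eq, h.fderiv]; rfl

lemma Dop_Aop_symm (hφ : ContDiff ℝ (⊤ : ℕ∞) φ) (c d : ℝ × (Fin 3 → ℝ)) (p : Pt) :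
    Dop (c.1, c.2, (0 : Fin 3 → ℝ)) (Aop φ d) p
      = Dop (d.1, d.2, (0 : Fin 3 → ℝ)) (Aop φ c) p := by
  rw [Dop_Aop hφ, Dop_Aop hφ]
  have hsym : IsSymmSndFDerivAt ℝ φ (p.1, p.2.1) :=
    (hφ.contDiffAt).isSymmSndFDerivAt (by simp; decide)
  simpa using hsym.eq (c.1, c.2) (d.1, d.2)

lemma Vop_Aop (hφ : ContDiff ℝ (⊤ : ℕ∞) φ) (d : ℝ × (Fin 3 → ℝ)) (k : Fin 3) (p : Pt) :
    Dop ((0:ℝ), (0 : Fin 3 → ℝ), Pi.single k 1) (Aop φ d) p = 0 := by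
  rw [Dop_Aop hφ]
  have h0 : ((0:ℝ), (0 : Fin 3 → ℝ)) = (0 : ℝ × (Fin 3 → ℝ)) := rfl
  simp [h0]

end Aop

lemma Vop_eq_Dop (i : Fin 3) (f : Pt → ℝ) :
    Vop i f = Dop ((0 : ℝ), (0 : Fin 3 → ℝ), Pi.single i 1) f := rfl

lemma Wop_eq (f : Pt → ℝ) :
    Wop f = fun p => ∑ i, (fun q : Pt => q.2.2 i) p *
      Dop ((0 : ℝ), (0 : Fin 3 → ℝ), Pi.single i 1) f p := rfl

lemma contDiff_Wop {f : Pt → ℝ} (hf : ContDiff ℝ (⊤ : ℕ∞) f) :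
    ContDiff ℝ (⊤ : ℕ∞) (Wop f) := by
  rw [Wop_eq]
  apply ContDiff.sum
  intro i _
  exact ((cV i).contDiff).mul (contDiff_Dop hf _)

lemma Dop_Wop {f : Pt → ℝ} (hf : ContDiff ℝ (⊤ : ℕ∞) f) (w p : Pt) :
    Dop w (Wop f) p = (∑ k, w.2.2 k * Vop k f p) + Wop (Dop w f) p := by
  have hdiff : ∀ k : Fin 3, DifferentiableAt ℝ
      (Dop ((0 : ℝ), (0 : Fin 3 → ℝ), Pi.single k 1) f) p :=
    fun k => ((contDiff_Dop hf _).differentiable (by simp)) p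
  have hcV : ∀ k : Fin 3, DifferentiableAt ℝ (fun q : Pt => q.2.2 k) p :=
    fun k => (cV k).differentiableAt
  rw [Wop_eq]
  rw [Dop_finset_sum Finset.univ (fun k _ => ((hcV k).fun_mul (hdiff k))) w]
  have : ∀ k : Fin 3, Dop w (fun q : Pt => q.2.2 k *
      Dop ((0 : ℝ), (0 : Fin 3 → ℝ), Pi.single k 1) f q) p
      = w.2.2 k * Vop k f p + p.2.2 k * Vop k (Dop w f) p := by
    intro k
    rw [Dop_mul (hcV k) (hdiff k) w, Dop_cV, Vop_eq_Dop, Vop_eq_Dop,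
      Dop_symm hf]
  simp only [this]
  rw [Finset.sum_add_distrib]
  rfl

lemma dAt {g : Pt → ℝ} (hg : ContDiff ℝ (⊤ : ℕ∞) g) (p : Pt) : DifferentiableAt ℝ g p :=
  (hg.differentiable (by simp)) p

def ext (d : ℝ × (Fin 3 → ℝ)) : Pt := (d.1, d.2, (0 : Fin 3 → ℝ))

lemma eop_eq (φ : ℝ × (Fin 3 → ℝ) → ℝ) (d : ℝ × (Fin 3 → ℝ)) (f : Pt → ℝ) :
    eop φ d f = fun p => Dop (ext d) f p - Aop φ d p * Wop f p := rfl

lemma contDiff_eop {φ : ℝ × (Fin 3 → ℝ) → ℝ} (hφ : ContDiff ℝ (⊤ : ℕ∞) φ)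
    {f : Pt → ℝ} (hf : ContDiff ℝ (⊤ : ℕ∞) f) (d : ℝ × (Fin 3 → ℝ)) :
    ContDiff ℝ (⊤ : ℕ∞) (eop φ d f) := by
  rw [eop_eq]
  exact (contDiff_Dop hf _).sub ((contDiff_Aop hφ d).mul (contDiff_Wop hf))

lemma ext_22 (d : ℝ × (Fin 3 → ℝ)) : (ext d).2.2 = 0 := rfl

lemma Dop_ext_Wop {f : Pt → ℝ} (hf : ContDiff ℝ (⊤ : ℕ∞) f) (d : ℝ × (Fin 3 → ℝ)) (p : Pt) :
    Dop (ext d) (Wop f) p = Wop (Dop (ext d) f) p := by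
  rw [Dop_Wop hf]
  simp [ext_22]

lemma Wop_eop {φ : ℝ × (Fin 3 → ℝ) → ℝ} (hφ : ContDiff ℝ (⊤ : ℕ∞) φ)
    {f : Pt → ℝ} (hf : ContDiff ℝ (⊤ : ℕ∞) f) (d : ℝ × (Fin 3 → ℝ)) (p : Pt) :
    Wop (eop φ d f) p = Wop (Dop (ext d) f) p - Aop φ d p * Wop (Wop f) p := by
  have key : ∀ k : Fin 3, Vop k (eop φ d f) p
      = Vop k (Dop (ext d) f) p - Aop φ d p * Vop k (Wop f) p := by
    intro k
    rw [Vop_eq_Dop, eop_eq]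
    rw [Dop_sub (dAt (contDiff_Dop hf _) p)
      (dAt ((contDiff_Aop hφ d).mul (contDiff_Wop hf)) p)]
    rw [Dop_mul (dAt (contDiff_Aop hφ d) p) (dAt (contDiff_Wop hf) p)]
    rw [Vop_Aop hφ]
    rw [Vop_eq_Dop, Vop_eq_Dop]
    ring
  have h1 : Wop (eop φ d f) p = ∑ k, p.2.2 k * Vop k (eop φ d f) p := rfl
  have h2 : Wop (Dop (ext d) f) p = ∑ k, p.2.2 k * Vop k (Dop (ext d) f) p := rfl
  have h3 : Wop (Wop f) p = ∑ k, p.2.2 k * Vop k (Wop f) p := rfl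
  rw [h1, h2, h3]
  simp only [key, mul_sub, Finset.sum_sub_distrib, Finset.mul_sum, mul_left_comm]

lemma eop_expand {φ : ℝ × (Fin 3 → ℝ) → ℝ} (hφ : ContDiff ℝ (⊤ : ℕ∞) φ)
    {f : Pt → ℝ} (hf : ContDiff ℝ (⊤ : ℕ∞) f) (c d : ℝ × (Fin 3 → ℝ)) (p : Pt) :
    eop φ c (eop φ d f) p =
      Dop (ext c) (Dop (ext d) f) p
      - Dop (ext c) (Aop φ d) p * Wop f p
      - Aop φ d p * Wop (Dop (ext c) f) p
      - Aop φ c p * Wop (Dop (ext d) f) p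
      + Aop φ c p * (Aop φ d p * Wop (Wop f) p) := by
  have h1 : eop φ c (eop φ d f) p
      = Dop (ext c) (eop φ d f) p - Aop φ c p * Wop (eop φ d f) p := by
    rw [eop_eq]
  rw [h1]
  rw [show Dop (ext c) (eop φ d f) p
      = Dop (ext c) (fun q => Dop (ext d) f q - Aop φ d q * Wop f q) p from by rw [← eop_eq]]
  rw [Dop_sub (dAt (contDiff_Dop hf _) p)
    (dAt ((contDiff_Aop hφ d).mul (contDiff_Wop hf)) p)]
  rw [Dop_mul (dAt (contDiff_Aop hφ d) p) (dAt (contDiff_Wop hf) p)]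
  rw [Dop_ext_Wop hf]
  rw [Wop_eop hφ hf]
  ring

lemma eop_comm {φ : ℝ × (Fin 3 → ℝ) → ℝ} (hφ : ContDiff ℝ (⊤ : ℕ∞) φ)
    {f : Pt → ℝ} (hf : ContDiff ℝ (⊤ : ℕ∞) f) (c d : ℝ × (Fin 3 → ℝ)) (p : Pt) :
    eop φ c (eop φ d f) p = eop φ d (eop φ c f) p := by
  rw [eop_expand hφ hf c d p, eop_expand hφ hf d c p]
  rw [Dop_symm hf (ext c) (ext d) p]
  rw [show Dop (ext c) (Aop φ d) p = Dop (ext d) (Aop φ c) p from Dop_Aop_symm hφ c d p]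
  ring

lemma Dop_add {a b : Pt → ℝ} {p : Pt} (ha : DifferentiableAt ℝ a p)
    (hb : DifferentiableAt ℝ b p) (w : Pt) :
    Dop w (fun q => a q + b q) p = Dop w a p + Dop w b p := by
  unfold Dop; rw [fderiv_fun_add ha hb]; rfl

lemma Wop_add {a b : Pt → ℝ} {p : Pt} (ha : DifferentiableAt ℝ a p)
    (hb : DifferentiableAt ℝ b p) :
    Wop (fun q => a q + b q) p = Wop a p + Wop b p := by
  unfold Wop
  rw [← Finset.sum_add_distrib]
  refine Finset.sum_congr rfl fun k _ => ?_
  rw [Vop_eq_Dop, Vop_eq_Dop, Vop_eq_Dop, Dop_add ha hb]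
  ring

lemma eop_add {φ : ℝ × (Fin 3 → ℝ) → ℝ} {a b : Pt → ℝ} {p : Pt}
    (ha : DifferentiableAt ℝ a p) (hb : DifferentiableAt ℝ b p) (d : ℝ × (Fin 3 → ℝ)) :
    eop φ d (fun q => a q + b q) p = eop φ d a p + eop φ d b p := by
  rw [eop_eq, eop_eq, eop_eq]
  simp only
  rw [Dop_add ha hb, Wop_add ha hb]
  ring

lemma Wop_coordT_mul {g : Pt → ℝ} (hg : ContDiff ℝ (⊤ : ℕ∞) g) (p : Pt) :
    Wop (fun q : Pt => q.1 * g q) p = p.1 * Wop g p := by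
  unfold Wop
  rw [Finset.mul_sum]
  refine Finset.sum_congr rfl fun k _ => ?_
  rw [Vop_eq_Dop, Dop_mul (show DifferentiableAt ℝ (fun q : Pt => q.1) p from cT.differentiableAt) (dAt hg p), Dop_cT, Vop_eq_Dop]
  simp; ring

lemma Wop_coordX_mul (i : Fin 3) {g : Pt → ℝ} (hg : ContDiff ℝ (⊤ : ℕ∞) g) (p : Pt) :
    Wop (fun q : Pt => q.2.1 i * g q) p = p.2.1 i * Wop g p := by
  unfold Wop
  rw [Finset.mul_sum]
  refine Finset.sum_congr rfl fun k _ => ?_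
  rw [Vop_eq_Dop, Dop_mul (show DifferentiableAt ℝ (fun q : Pt => q.2.1 i) p from (cX i).differentiableAt) (dAt hg p), Dop_cX, Vop_eq_Dop]
  simp; ring

lemma eop_coordT_mul {φ : ℝ × (Fin 3 → ℝ) → ℝ} {g : Pt → ℝ}
    (hg : ContDiff ℝ (⊤ : ℕ∞) g) (d : ℝ × (Fin 3 → ℝ)) (p : Pt) :
    eop φ d (fun q => q.1 * g q) p = d.1 * g p + p.1 * eop φ d g p := by
  rw [eop_eq, eop_eq]
  simp only
  rw [Dop_mul (show DifferentiableAt ℝ (fun q : Pt => q.1) p from cT.differentiableAt) (dAt hg p), Dop_cT, Wop_coordT_mul hg]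
  have he : (ext d).1 = d.1 := rfl
  rw [he]; ring

lemma eop_coordX_mul (i : Fin 3) {φ : ℝ × (Fin 3 → ℝ) → ℝ} {g : Pt → ℝ}
    (hg : ContDiff ℝ (⊤ : ℕ∞) g) (d : ℝ × (Fin 3 → ℝ)) (p : Pt) :
    eop φ d (fun q => q.2.1 i * g q) p = d.2 i * g p + p.2.1 i * eop φ d g p := by
  rw [eop_eq, eop_eq]
  simp only
  rw [Dop_mul (show DifferentiableAt ℝ (fun q : Pt => q.2.1 i) p from (cX i).differentiableAt) (dAt hg p), Dop_cX, Wop_coordX_mul i hg]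
  have he : (ext d).2.1 i = d.2 i := rfl
  rw [he]; ring

lemma Zb_comm_gen {φ : ℝ × (Fin 3 → ℝ) → ℝ} (hφ : ContDiff ℝ (⊤ : ℕ∞) φ)
    {f : Pt → ℝ} (hf : ContDiff ℝ (⊤ : ℕ∞) f) (i : Fin 3) (d : ℝ × (Fin 3 → ℝ)) (p : Pt) :
    Zb φ i (eop φ d f) p - eop φ d (Zb φ i f) p
      = -(d.1 * eop φ ((0 : ℝ), Pi.single i 1) f p)
        - d.2 i * eop φ ((1 : ℝ), (0 : Fin 3 → ℝ)) f p := by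
  set ei : ℝ × (Fin 3 → ℝ) := ((0 : ℝ), Pi.single i 1) with hei
  set e0 : ℝ × (Fin 3 → ℝ) := ((1 : ℝ), (0 : Fin 3 → ℝ)) with he0
  have ha : DifferentiableAt ℝ (fun q : Pt => q.1 * eop φ ei f q) p :=
    (show DifferentiableAt ℝ (fun q : Pt => q.1) p from cT.differentiableAt).mul
      (dAt (contDiff_eop hφ hf ei) p)
  have hb : DifferentiableAt ℝ (fun q : Pt => q.2.1 i * eop φ e0 f q) p :=
    (show DifferentiableAt ℝ (fun q : Pt => q.2.1 i) p from (cX i).differentiableAt).mul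
      (dAt (contDiff_eop hφ hf e0) p)
  have hsplit : eop φ d (Zb φ i f) p
      = eop φ d (fun q : Pt => q.1 * eop φ ei f q) p
        + eop φ d (fun q : Pt => q.2.1 i * eop φ e0 f q) p :=
    eop_add (a := fun q : Pt => q.1 * eop φ ei f q)
      (b := fun q : Pt => q.2.1 i * eop φ e0 f q) ha hb d
  have hZ : Zb φ i (eop φ d f) p
      = p.1 * eop φ ei (eop φ d f) p + p.2.1 i * eop φ e0 (eop φ d f) p := rfl
  rw [hZ, hsplit, eop_coordT_mul (contDiff_eop hφ hf ei) d p,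
    eop_coordX_mul i (contDiff_eop hφ hf e0) d p,
    eop_comm hφ hf d ei p, eop_comm hφ hf d e0 p]
  ring

/-- Lemma 3.5, boost case: `[𝐙_i, 𝐞_j] f = −δ_{ij}·𝐞_0 f` and `[𝐙_i, 𝐞_0] f = −𝐞_i f`. -/
theorem commutator_Zb_generalizedTranslation
    (φ : ℝ × (Fin 3 → ℝ) → ℝ) (hφ : ContDiff ℝ (⊤ : ℕ∞) φ)
    (f : Pt → ℝ) (hf : ContDiff ℝ (⊤ : ℕ∞) f) (i : Fin 3) (p : Pt) :
    (∀ j : Fin 3,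
      Zb φ i (eop φ ((0 : ℝ), Pi.single j 1) f) p
          - eop φ ((0 : ℝ), Pi.single j 1) (Zb φ i f) p
        = -(if i = j then (1 : ℝ) else 0) * eop φ ((1 : ℝ), (0 : Fin 3 → ℝ)) f p) ∧
    (Zb φ i (eop φ ((1 : ℝ), (0 : Fin 3 → ℝ)) f) p
        - eop φ ((1 : ℝ), (0 : Fin 3 → ℝ)) (Zb φ i f) p
      = -eop φ ((0 : ℝ), Pi.single i 1) f p) := by
  constructor
  · intro j
    rw [Zb_comm_gen hφ hf i ((0 : ℝ), Pi.single j 1) p]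
    by_cases h : i = j <;> simp [h, Pi.single_apply]
  · rw [Zb_comm_gen hφ hf i ((1 : ℝ), (0 : Fin 3 → ℝ)) p]
    simp
end
end

section
/- Commutators of lifted boost fields built from generalized translations with generalized translations (Lemma 3.6, boost case): fix i ∈ {1,2,3} and define 𝐙̂_i = t·𝐞_i + xⁱ·𝐞_0 + v⁰∂_{vⁱ} (the complete lift of the Lorentz boost with ordinary translations replaced by generalized translations). Then for every smooth f(t,x,v) and every j ∈ {1,2,3}: [𝐙̂_i, 𝐞_j] f = −δ_{ij}·𝐞_0 f − (∂_{x^j}φ/v⁰)·∂_{vⁱ} f and [𝐙̂_i, 𝐞_0] f = −𝐞_i f − (∂_t φ/v⁰)·∂_{vⁱ} f. -/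
noncomputable section

/-- `𝐙̂_i = t·𝐞_i + xⁱ·𝐞_0 + v⁰∂_{vⁱ}`: the complete lift of the Lorentz boost with
ordinary translations replaced by generalized translations. -/
def Zhat (φ : ℝ × (Fin 3 → ℝ) → ℝ) (i : Fin 3) (f : Pt → ℝ) (p : Pt) : ℝ :=
  p.1 * eop φ ((0 : ℝ), Pi.single i 1) f p
    + p.2.1 i * eop φ ((1 : ℝ), (0 : Fin 3 → ℝ)) f p
    + vzero p.2.2 * Vop i f p

namespace CommAux

open ContinuousLinearMap

/-! ### Projection CLMs on phase space -/

def πt : Pt →L[ℝ] ℝ := ContinuousLinearMap.fst ℝ ℝ ((Fin 3 → ℝ) × (Fin 3 → ℝ))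

def πx (i : Fin 3) : Pt →L[ℝ] ℝ :=
  (ContinuousLinearMap.proj i).comp
    ((ContinuousLinearMap.fst ℝ (Fin 3 → ℝ) (Fin 3 → ℝ)).comp
      (ContinuousLinearMap.snd ℝ ℝ ((Fin 3 → ℝ) × (Fin 3 → ℝ))))

def πvv : Pt →L[ℝ] (Fin 3 → ℝ) :=
  (ContinuousLinearMap.snd ℝ (Fin 3 → ℝ) (Fin 3 → ℝ)).comp
    (ContinuousLinearMap.snd ℝ ℝ ((Fin 3 → ℝ) × (Fin 3 → ℝ)))

def πst : Pt →L[ℝ] (ℝ × (Fin 3 → ℝ)) :=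
  (ContinuousLinearMap.fst ℝ ℝ ((Fin 3 → ℝ) × (Fin 3 → ℝ))).prod
    ((ContinuousLinearMap.fst ℝ (Fin 3 → ℝ) (Fin 3 → ℝ)).comp
      (ContinuousLinearMap.snd ℝ ℝ ((Fin 3 → ℝ) × (Fin 3 → ℝ))))

@[simp] lemma πt_apply (p : Pt) : πt p = p.1 := rfl
@[simp] lemma πx_apply (i : Fin 3) (p : Pt) : πx i p = p.2.1 i := rfl
@[simp] lemma πvv_apply (p : Pt) : πvv p = p.2.2 := rfl
@[simp] lemma πst_apply (p : Pt) : πst p = (p.1, p.2.1) := rfl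

/-! ### Second derivatives -/

def D2 (f : Pt → ℝ) (p a b : Pt) : ℝ := fderiv ℝ (fderiv ℝ f) p a b

def Hphi (φ : ℝ × (Fin 3 → ℝ) → ℝ) (q c d : ℝ × (Fin 3 → ℝ)) : ℝ :=
  fderiv ℝ (fderiv ℝ φ) q c d

variable {E : Type*} [NormedAddCommGroup E] [NormedSpace ℝ E]

lemma contDiff_fderiv_apply {g : E → ℝ} (hg : ContDiff ℝ (⊤:ℕ∞) g) (u : E) :
    ContDiff ℝ (⊤:ℕ∞) (fun p => fderiv ℝ g p u) :=
  (hg.fderiv_right (by simp)).clm_apply contDiff_const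

lemma fderiv_fderiv_apply {g : E → ℝ} (hg : ContDiff ℝ (⊤:ℕ∞) g) (u p w : E) :
    fderiv ℝ (fun q => fderiv ℝ g q u) p w = fderiv ℝ (fderiv ℝ g) p w u := by
  have hC : ContDiff ℝ (⊤:ℕ∞) (fderiv ℝ g) := hg.fderiv_right (by simp)
  have hd : DifferentiableAt ℝ (fderiv ℝ g) p :=
    (hC.differentiable (by norm_cast)).differentiableAt
  rw [fderiv_clm_apply hd (differentiableAt_const u)]
  simp

lemma snd_symm {g : E → ℝ} (hg : ContDiff ℝ (⊤:ℕ∞) g) (p a b : E) :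
    fderiv ℝ (fderiv ℝ g) p a b = fderiv ℝ (fderiv ℝ g) p b a :=
  (hg.contDiffAt.isSymmSndFDerivAt (by rw [minSmoothness_of_isRCLikeNormedField]; exact WithTop.coe_le_coe.2 le_top)) a b

/-! ### Applied derivative rules -/

lemma fderiv_mul_apply {a b : Pt → ℝ} {p : Pt} (ha : DifferentiableAt ℝ a p)
    (hb : DifferentiableAt ℝ b p) (w : Pt) :
    fderiv ℝ (fun q => a q * b q) p w =
      fderiv ℝ a p w * b p + a p * fderiv ℝ b p w := by
  rw [fderiv_fun_mul ha hb]; simp; ring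

lemma fderiv_add_apply' {a b : Pt → ℝ} {p : Pt} (ha : DifferentiableAt ℝ a p)
    (hb : DifferentiableAt ℝ b p) (w : Pt) :
    fderiv ℝ (fun q => a q + b q) p w = fderiv ℝ a p w + fderiv ℝ b p w := by
  rw [fderiv_fun_add ha hb]; simp

lemma fderiv_sub_apply' {a b : Pt → ℝ} {p : Pt} (ha : DifferentiableAt ℝ a p)
    (hb : DifferentiableAt ℝ b p) (w : Pt) :
    fderiv ℝ (fun q => a q - b q) p w = fderiv ℝ a p w - fderiv ℝ b p w := by
  rw [fderiv_fun_sub ha hb]; simp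

lemma fderiv_sum_apply' {A : Fin 3 → Pt → ℝ} {p : Pt}
    (h : ∀ k, DifferentiableAt ℝ (A k) p) (w : Pt) :
    fderiv ℝ (fun q => ∑ k, A k q) p w = ∑ k, fderiv ℝ (A k) p w := by
  rw [fderiv_fun_sum (fun k _ => h k)]; simp

/-! ### vzero facts -/

lemma vzero_arg_pos (v : Fin 3 → ℝ) : 0 < 1 + ∑ i, v i ^ 2 := by positivity

lemma vzero_pos (v : Fin 3 → ℝ) : 0 < vzero v :=
  Real.sqrt_pos.2 (vzero_arg_pos v)

lemma vzero_sq (v : Fin 3 → ℝ) : vzero v * vzero v = 1 + ∑ i, v i ^ 2 :=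
  Real.mul_self_sqrt (le_of_lt (vzero_arg_pos v))

lemma hasFDerivAt_vzero (v : Fin 3 → ℝ) :
    HasFDerivAt vzero
      ((vzero v)⁻¹ • ∑ i, (v i) • (ContinuousLinearMap.proj i : (Fin 3 → ℝ) →L[ℝ] ℝ)) v := by
  have hi : ∀ i : Fin 3, HasFDerivAt (fun v : Fin 3 → ℝ => v i ^ 2)
      ((2 * v i) • (ContinuousLinearMap.proj i : (Fin 3 → ℝ) →L[ℝ] ℝ)) v := by
    intro i
    have h := ((ContinuousLinearMap.proj i : (Fin 3 → ℝ) →L[ℝ] ℝ)).hasFDerivAt (x := v)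
    have := h.fun_mul h
    refine (this.congr_fderiv ?_).congr_of_eventuallyEq (Filter.Eventually.of_forall fun w => ?_)
    · ext w; simp; ring
    · simp [pow_two]
  have hg : HasFDerivAt (fun v : Fin 3 → ℝ => 1 + ∑ i, v i ^ 2)
      (∑ i, (2 * v i) • (ContinuousLinearMap.proj i : (Fin 3 → ℝ) →L[ℝ] ℝ)) v :=
    (HasFDerivAt.fun_sum (fun i _ => hi i)).const_add 1
  have h2 := hg.sqrt (ne_of_gt (vzero_arg_pos v))
  refine h2.congr_fderiv ?_
  ext w
  have h0 : Real.sqrt (1 + ∑ i, v i ^ 2) = vzero v := rfl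
  simp [h0, Finset.mul_sum]
  refine Finset.sum_congr rfl fun i _ => ?_
  have := (vzero_pos v).ne'
  field_simp

lemma fderiv_vzeroP_apply (p w : Pt) :
    fderiv ℝ (fun q : Pt => vzero q.2.2) p w = (∑ k, p.2.2 k * w.2.2 k) / vzero p.2.2 := by
  have h : HasFDerivAt (fun q : Pt => vzero q.2.2)
      (((vzero p.2.2)⁻¹ • ∑ i, (p.2.2 i) •
          (ContinuousLinearMap.proj i : (Fin 3 → ℝ) →L[ℝ] ℝ)).comp πvv) p :=
    (hasFDerivAt_vzero p.2.2).comp (g := vzero) p (πvv.hasFDerivAt)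
  rw [h.fderiv]
  simp [Finset.mul_sum, div_eq_inv_mul]

lemma contDiff_vzero : ContDiff ℝ (⊤:ℕ∞) vzero := by
  rw [contDiff_iff_contDiffAt]
  intro v
  exact (Real.contDiffAt_sqrt (ne_of_gt (vzero_arg_pos v))).comp v
      (contDiff_const.add (ContDiff.sum fun i _ =>
        ((ContinuousLinearMap.proj i : (Fin 3 → ℝ) →L[ℝ] ℝ).contDiff).pow 2)).contDiffAt

lemma contDiff_vzeroP : ContDiff ℝ (⊤:ℕ∞) (fun q : Pt => vzero q.2.2) :=
  contDiff_vzero.comp (by fun_prop)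

/-! ### psi = Dphi as a phase-space function -/

lemma contDiff_psi {φ : ℝ × (Fin 3 → ℝ) → ℝ} (hφ : ContDiff ℝ (⊤:ℕ∞) φ)
    (d : ℝ × (Fin 3 → ℝ)) :
    ContDiff ℝ (⊤:ℕ∞) (fun q : Pt => Dphi φ d (q.1, q.2.1)) :=
  (contDiff_fderiv_apply hφ d).comp πst.contDiff

lemma fderiv_psi_apply {φ : ℝ × (Fin 3 → ℝ) → ℝ} (hφ : ContDiff ℝ (⊤:ℕ∞) φ)
    (d : ℝ × (Fin 3 → ℝ)) (p w : Pt) :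
    fderiv ℝ (fun q : Pt => Dphi φ d (q.1, q.2.1)) p w
      = Hphi φ (p.1, p.2.1) (w.1, w.2.1) d := by
  have hg : DifferentiableAt ℝ (fun q : ℝ × (Fin 3 → ℝ) => fderiv ℝ φ q d) (πst p) :=
    ((contDiff_fderiv_apply hφ d).differentiable (by norm_cast)).differentiableAt
  have heq : (fun q : Pt => Dphi φ d (q.1, q.2.1))
      = (fun q : ℝ × (Fin 3 → ℝ) => fderiv ℝ φ q d) ∘ πst := rfl
  rw [heq, fderiv_comp p hg πst.differentiableAt]
  simp only [πst.fderiv, ContinuousLinearMap.coe_comp', Function.comp_apply, πst_apply]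
  rw [fderiv_fderiv_apply hφ d (p.1, p.2.1) (w.1, w.2.1)]
  rfl

end CommAux

namespace CommAux

variable {φ : ℝ × (Fin 3 → ℝ) → ℝ} {f a b : Pt → ℝ}

/-- DifferentiableAt from smoothness. -/
lemma dA {g : Pt → ℝ} (h : ContDiff ℝ (⊤:ℕ∞) g) {p : Pt} : DifferentiableAt ℝ g p :=
  (h.differentiable (by norm_cast)).differentiableAt

lemma contDiff_Vop (hf : ContDiff ℝ (⊤:ℕ∞) f) (k : Fin 3) :
    ContDiff ℝ (⊤:ℕ∞) (Vop k f) := by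
  unfold Vop; exact contDiff_fderiv_apply hf _

lemma contDiff_coord_t : ContDiff ℝ (⊤:ℕ∞) (fun q : Pt => q.1) := by fun_prop

lemma contDiff_coord_x (i : Fin 3) : ContDiff ℝ (⊤:ℕ∞) (fun q : Pt => q.2.1 i) := by fun_prop

lemma contDiff_coord_v (k : Fin 3) : ContDiff ℝ (⊤:ℕ∞) (fun q : Pt => q.2.2 k) := by fun_prop

lemma contDiff_Wop (hf : ContDiff ℝ (⊤:ℕ∞) f) : ContDiff ℝ (⊤:ℕ∞) (Wop f) := by
  unfold Wop
  exact ContDiff.sum fun k _ => (contDiff_coord_v k).mul (contDiff_Vop hf k)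

lemma contDiff_eop (hφ : ContDiff ℝ (⊤:ℕ∞) φ) (hf : ContDiff ℝ (⊤:ℕ∞) f)
    (d : ℝ × (Fin 3 → ℝ)) : ContDiff ℝ (⊤:ℕ∞) (eop φ d f) := by
  unfold eop
  exact (contDiff_fderiv_apply hf _).sub ((contDiff_psi hφ d).mul (contDiff_Wop hf))

/-! ### coordinate derivative values -/

lemma fderiv_coord_t (p w : Pt) : fderiv ℝ (fun q : Pt => q.1) p w = w.1 := by
  rw [show (fun q : Pt => q.1) = ⇑πt from rfl, πt.fderiv]; rfl

lemma fderiv_coord_x (i : Fin 3) (p w : Pt) :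
    fderiv ℝ (fun q : Pt => q.2.1 i) p w = w.2.1 i := by
  rw [show (fun q : Pt => q.2.1 i) = ⇑(πx i) from rfl, (πx i).fderiv]; rfl

lemma fderiv_coord_v (k : Fin 3) (p w : Pt) :
    fderiv ℝ (fun q : Pt => q.2.2 k) p w = w.2.2 k := by
  rw [show (fun q : Pt => q.2.2 k) =
    ⇑((ContinuousLinearMap.proj k).comp πvv) from rfl,
    ((ContinuousLinearMap.proj (R := ℝ) (φ := fun _ : Fin 3 => ℝ) k).comp πvv).fderiv]
  rfl

lemma fderiv_Vop_apply (hf : ContDiff ℝ (⊤:ℕ∞) f) (i : Fin 3) (p w : Pt) :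
    fderiv ℝ (Vop i f) p w = D2 f p w ((0:ℝ), (0:Fin 3 → ℝ), Pi.single i 1) := by
  unfold Vop D2; exact fderiv_fderiv_apply hf _ p w

/-! ### delta sums -/

lemma sum_single_mul (g : Fin 3 → ℝ) (j : Fin 3) :
    ∑ k, (Pi.single j 1 : Fin 3 → ℝ) k * g k = g j := by
  simp [Pi.single_apply]

lemma sum_mul_single (g : Fin 3 → ℝ) (j : Fin 3) :
    ∑ k, g k * (Pi.single j 1 : Fin 3 → ℝ) k = g j := by
  simp [Pi.single_apply]

/-! ### expansion of derivatives of Wop and eop -/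

lemma fderiv_Wop_apply (hf : ContDiff ℝ (⊤:ℕ∞) f) (p w : Pt) :
    fderiv ℝ (Wop f) p w =
      ∑ k, (w.2.2 k * Vop k f p
        + p.2.2 k * D2 f p w ((0:ℝ), (0:Fin 3 → ℝ), Pi.single k 1)) := by
  unfold Wop
  rw [fderiv_sum_apply' (A := fun k q => q.2.2 k * Vop k f q) (fun k => (dA (contDiff_coord_v k)).mul (dA (contDiff_Vop hf k))) w]
  refine Finset.sum_congr rfl fun k _ => ?_
  rw [fderiv_mul_apply (dA (contDiff_coord_v k)) (dA (contDiff_Vop hf k)),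
    fderiv_coord_v, fderiv_Vop_apply hf]

lemma fderiv_eop_apply (hφ : ContDiff ℝ (⊤:ℕ∞) φ) (hf : ContDiff ℝ (⊤:ℕ∞) f)
    (d : ℝ × (Fin 3 → ℝ)) (p w : Pt) :
    fderiv ℝ (eop φ d f) p w =
      D2 f p w (d.1, d.2, (0:Fin 3 → ℝ))
      - Hphi φ (p.1, p.2.1) (w.1, w.2.1) d * Wop f p
      - Dphi φ d (p.1, p.2.1) *
          ∑ k, (w.2.2 k * Vop k f p
            + p.2.2 k * D2 f p w ((0:ℝ), (0:Fin 3 → ℝ), Pi.single k 1)) := by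
  unfold eop
  rw [fderiv_sub_apply' (dA (contDiff_fderiv_apply hf _))
      (dA ((contDiff_psi hφ d).mul (contDiff_Wop hf))),
    fderiv_mul_apply (dA (contDiff_psi hφ d)) (dA (contDiff_Wop hf)),
    fderiv_psi_apply hφ d, fderiv_fderiv_apply hf, fderiv_Wop_apply hf]
  unfold D2
  ring

lemma Hphi_zero (q : ℝ × (Fin 3 → ℝ)) (d : ℝ × (Fin 3 → ℝ)) :
    Hphi φ q ((0:ℝ), (0:Fin 3 → ℝ)) d = 0 := by
  unfold Hphi
  rw [Prod.mk_zero_zero]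
  simp

lemma fderiv_eop_hor (hφ : ContDiff ℝ (⊤:ℕ∞) φ) (hf : ContDiff ℝ (⊤:ℕ∞) f)
    (c d : ℝ × (Fin 3 → ℝ)) (p : Pt) :
    fderiv ℝ (eop φ d f) p (c.1, c.2, (0:Fin 3 → ℝ)) =
      D2 f p (c.1, c.2, (0:Fin 3 → ℝ)) (d.1, d.2, (0:Fin 3 → ℝ))
      - Hphi φ (p.1, p.2.1) c d * Wop f p
      - Dphi φ d (p.1, p.2.1) *
          ∑ k, p.2.2 k * D2 f p (c.1, c.2, (0:Fin 3 → ℝ)) ((0:ℝ), (0:Fin 3 → ℝ), Pi.single k 1) := by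
  rw [fderiv_eop_apply hφ hf d p]
  simp

lemma fderiv_eop_vrt (hφ : ContDiff ℝ (⊤:ℕ∞) φ) (hf : ContDiff ℝ (⊤:ℕ∞) f)
    (d : ℝ × (Fin 3 → ℝ)) (j : Fin 3) (p : Pt) :
    fderiv ℝ (eop φ d f) p ((0:ℝ), (0:Fin 3 → ℝ), Pi.single j 1) =
      D2 f p ((0:ℝ), (0:Fin 3 → ℝ), Pi.single j 1) (d.1, d.2, (0:Fin 3 → ℝ))
      - Dphi φ d (p.1, p.2.1) * (Vop j f p
          + ∑ k, p.2.2 k * D2 f p ((0:ℝ), (0:Fin 3 → ℝ), Pi.single j 1)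
              ((0:ℝ), (0:Fin 3 → ℝ), Pi.single k 1)) := by
  rw [fderiv_eop_apply hφ hf d p]
  rw [Finset.sum_add_distrib]
  simp only [Hphi_zero]
  rw [sum_single_mul (fun k => Vop k f p) j]
  ring

lemma eop_apply_eq (d : ℝ × (Fin 3 → ℝ)) (G : Pt → ℝ) (p : Pt) :
    eop φ d G p = fderiv ℝ G p (d.1, d.2, (0:Fin 3 → ℝ))
      - Dphi φ d (p.1, p.2.1) *
          ∑ k, p.2.2 k * fderiv ℝ G p ((0:ℝ), (0:Fin 3 → ℝ), Pi.single k 1) := rfl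

end CommAux

namespace CommAux

variable {φ : ℝ × (Fin 3 → ℝ) → ℝ} {f a b : Pt → ℝ}

lemma D2_symm (hf : ContDiff ℝ (⊤:ℕ∞) f) (p u v : Pt) : D2 f p u v = D2 f p v u :=
  snd_symm hf p u v

lemma fderiv_mul_applyC (ha : ContDiff ℝ (⊤:ℕ∞) a) (hb : ContDiff ℝ (⊤:ℕ∞) b)
    (p w : Pt) :
    fderiv ℝ (fun q => a q * b q) p w =
      fderiv ℝ a p w * b p + a p * fderiv ℝ b p w :=
  fderiv_mul_apply (dA ha) (dA hb) w

lemma fderiv_add_applyC (ha : ContDiff ℝ (⊤:ℕ∞) a) (hb : ContDiff ℝ (⊤:ℕ∞) b)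
    (p w : Pt) :
    fderiv ℝ (fun q => a q + b q) p w = fderiv ℝ a p w + fderiv ℝ b p w :=
  fderiv_add_apply' (dA ha) (dA hb) w

lemma sum_mul_helper (v A B S : Fin 3 → ℝ) (ψ : ℝ) :
    ∑ k, v k * (A k - ψ * (B k + S k))
      = (∑ k, v k * A k) - ψ * (∑ k, v k * B k) - ψ * (∑ k, v k * S k) := by
  rw [Finset.mul_sum, Finset.mul_sum, ← Finset.sum_sub_distrib, ← Finset.sum_sub_distrib]
  exact Finset.sum_congr rfl fun k _ => by ring

lemma eop_eop (hφ : ContDiff ℝ (⊤:ℕ∞) φ) (hf : ContDiff ℝ (⊤:ℕ∞) f)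
    (c d : ℝ × (Fin 3 → ℝ)) (p : Pt) :
    eop φ c (eop φ d f) p =
      D2 f p (c.1, c.2, (0:Fin 3 → ℝ)) (d.1, d.2, (0:Fin 3 → ℝ))
      - Hphi φ (p.1, p.2.1) c d * Wop f p
      - Dphi φ d (p.1, p.2.1) *
          (∑ k, p.2.2 k * D2 f p (c.1, c.2, (0:Fin 3 → ℝ)) ((0:ℝ), (0:Fin 3 → ℝ), Pi.single k 1))
      - Dphi φ c (p.1, p.2.1) *
          (∑ k, p.2.2 k * D2 f p ((0:ℝ), (0:Fin 3 → ℝ), Pi.single k 1) (d.1, d.2, (0:Fin 3 → ℝ)))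
      + Dphi φ c (p.1, p.2.1) * Dphi φ d (p.1, p.2.1) * Wop f p
      + Dphi φ c (p.1, p.2.1) * Dphi φ d (p.1, p.2.1) *
          (∑ k, p.2.2 k * ∑ m, p.2.2 m *
            D2 f p ((0:ℝ), (0:Fin 3 → ℝ), Pi.single k 1) ((0:ℝ), (0:Fin 3 → ℝ), Pi.single m 1)) := by
  rw [eop_apply_eq]
  simp only [fderiv_eop_hor hφ hf c d, fderiv_eop_vrt hφ hf d]
  rw [sum_mul_helper]
  have hw : (∑ k, p.2.2 k * Vop k f p) = Wop f p := rfl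
  rw [hw]
  ring

lemma eop_comm (hφ : ContDiff ℝ (⊤:ℕ∞) φ) (hf : ContDiff ℝ (⊤:ℕ∞) f)
    (c d : ℝ × (Fin 3 → ℝ)) (p : Pt) :
    eop φ c (eop φ d f) p = eop φ d (eop φ c f) p := by
  rw [eop_eop hφ hf c d p, eop_eop hφ hf d c p]
  have h1 : D2 f p (c.1, c.2, (0:Fin 3 → ℝ)) (d.1, d.2, (0:Fin 3 → ℝ))
      = D2 f p (d.1, d.2, (0:Fin 3 → ℝ)) (c.1, c.2, (0:Fin 3 → ℝ)) := D2_symm hf p _ _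
  have h2 : Hphi φ (p.1, p.2.1) c d = Hphi φ (p.1, p.2.1) d c := snd_symm hφ _ _ _
  have h3 : ∀ w : Pt, (∑ k, p.2.2 k * D2 f p ((0:ℝ), (0:Fin 3 → ℝ), Pi.single k 1) w)
      = ∑ k, p.2.2 k * D2 f p w ((0:ℝ), (0:Fin 3 → ℝ), Pi.single k 1) := fun w =>
    Finset.sum_congr rfl fun k _ => by rw [D2_symm hf p]
  rw [h1, h2, h3, h3]
  ring

lemma V_eop (hφ : ContDiff ℝ (⊤:ℕ∞) φ) (hf : ContDiff ℝ (⊤:ℕ∞) f)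
    (i : Fin 3) (d : ℝ × (Fin 3 → ℝ)) (p : Pt) :
    Vop i (eop φ d f) p
      = eop φ d (Vop i f) p - Dphi φ d (p.1, p.2.1) * Vop i f p := by
  have hL : Vop i (eop φ d f) p
      = fderiv ℝ (eop φ d f) p ((0:ℝ), (0:Fin 3 → ℝ), Pi.single i 1) := rfl
  rw [hL, fderiv_eop_vrt hφ hf d i p, eop_apply_eq]
  simp only [fderiv_Vop_apply hf]
  have h3 : (∑ k, p.2.2 k * D2 f p ((0:ℝ), (0:Fin 3 → ℝ), Pi.single i 1)
        ((0:ℝ), (0:Fin 3 → ℝ), Pi.single k 1))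
      = ∑ k, p.2.2 k * D2 f p ((0:ℝ), (0:Fin 3 → ℝ), Pi.single k 1)
        ((0:ℝ), (0:Fin 3 → ℝ), Pi.single i 1) := Finset.sum_congr rfl fun k _ => by
    rw [D2_symm hf p]
  rw [h3, D2_symm hf p ((0:ℝ), (0:Fin 3 → ℝ), Pi.single i 1) (d.1, d.2, (0:Fin 3 → ℝ))]
  ring

/-! ### Leibniz rules -/

lemma Wop_mul (ha : ContDiff ℝ (⊤:ℕ∞) a) (hb : ContDiff ℝ (⊤:ℕ∞) b) (p : Pt) :
    Wop (fun q => a q * b q) p = Wop a p * b p + a p * Wop b p := by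
  unfold Wop Vop
  simp only [fderiv_mul_applyC ha hb]
  rw [Finset.sum_mul, Finset.mul_sum, ← Finset.sum_add_distrib]
  exact Finset.sum_congr rfl fun k _ => by ring

lemma eop_mul (hφ : ContDiff ℝ (⊤:ℕ∞) φ) (ha : ContDiff ℝ (⊤:ℕ∞) a)
    (hb : ContDiff ℝ (⊤:ℕ∞) b) (d : ℝ × (Fin 3 → ℝ)) (p : Pt) :
    eop φ d (fun q => a q * b q) p = eop φ d a p * b p + a p * eop φ d b p := by
  unfold eop
  rw [fderiv_mul_applyC ha hb, Wop_mul ha hb]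
  ring

lemma eop_add (ha : ContDiff ℝ (⊤:ℕ∞) a) (hb : ContDiff ℝ (⊤:ℕ∞) b)
    (d : ℝ × (Fin 3 → ℝ)) (p : Pt) :
    eop φ d (fun q => a q + b q) p = eop φ d a p + eop φ d b p := by
  unfold eop Wop Vop
  simp only [fderiv_add_applyC ha hb, mul_add, Finset.sum_add_distrib]
  ring

/-! ### eop on coordinates -/

lemma eop_coord_t (d : ℝ × (Fin 3 → ℝ)) (p : Pt) :
    eop φ d (fun q : Pt => q.1) p = d.1 := by
  unfold eop Wop Vop
  simp only [fderiv_coord_t]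
  simp

lemma eop_coord_x (i : Fin 3) (d : ℝ × (Fin 3 → ℝ)) (p : Pt) :
    eop φ d (fun q : Pt => q.2.1 i) p = d.2 i := by
  unfold eop Wop Vop
  simp only [fderiv_coord_x i]
  simp

lemma eop_vzero (d : ℝ × (Fin 3 → ℝ)) (p : Pt) :
    eop φ d (fun q : Pt => vzero q.2.2) p
      = - Dphi φ d (p.1, p.2.1) * ((∑ k, p.2.2 k ^ 2) / vzero p.2.2) := by
  unfold eop Wop Vop
  simp only [fderiv_vzeroP_apply]
  have h2 : ∀ k : Fin 3, (∑ m, p.2.2 m * (Pi.single k 1 : Fin 3 → ℝ) m) = p.2.2 k :=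
    fun k => sum_mul_single _ k
  have h3 : (∑ k, p.2.2 k * (p.2.2 k / vzero p.2.2)) = (∑ k, p.2.2 k ^ 2) / vzero p.2.2 := by
    rw [Finset.sum_div]
    exact Finset.sum_congr rfl fun k _ => by rw [pow_two]; ring
  simp [h2, h3]

end CommAux

namespace CommAux

variable {φ : ℝ × (Fin 3 → ℝ) → ℝ} {f : Pt → ℝ}

lemma main_commutator (hφ : ContDiff ℝ (⊤:ℕ∞) φ) (hf : ContDiff ℝ (⊤:ℕ∞) f)
    (i : Fin 3) (d : ℝ × (Fin 3 → ℝ)) (p : Pt) :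
    Zhat φ i (eop φ d f) p - eop φ d (Zhat φ i f) p
      = -(d.1) * eop φ ((0:ℝ), Pi.single i 1) f p
        - d.2 i * eop φ ((1:ℝ), (0:Fin 3 → ℝ)) f p
        - (Dphi φ d (p.1, p.2.1) / vzero p.2.2) * Vop i f p := by
  have hei := contDiff_eop hφ hf ((0:ℝ), Pi.single i 1)
  have he0 := contDiff_eop hφ hf ((1:ℝ), (0:Fin 3 → ℝ))
  have hVi := contDiff_Vop hf i
  have ht : ContDiff ℝ (⊤:ℕ∞) (fun q : Pt => q.1) := contDiff_coord_t
  have hx : ContDiff ℝ (⊤:ℕ∞) (fun q : Pt => q.2.1 i) := contDiff_coord_x i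
  have hv0 : ContDiff ℝ (⊤:ℕ∞) (fun q : Pt => vzero q.2.2) := contDiff_vzeroP
  have h1 : eop φ d (Zhat φ i f) p
      = (d.1 * eop φ ((0:ℝ), Pi.single i 1) f p
          + p.1 * eop φ d (eop φ ((0:ℝ), Pi.single i 1) f) p)
        + (d.2 i * eop φ ((1:ℝ), (0:Fin 3 → ℝ)) f p
          + p.2.1 i * eop φ d (eop φ ((1:ℝ), (0:Fin 3 → ℝ)) f) p)
        + ((- Dphi φ d (p.1, p.2.1) * ((∑ k, p.2.2 k ^ 2) / vzero p.2.2)) * Vop i f p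
          + vzero p.2.2 * eop φ d (Vop i f) p) := by
    have e0 : Zhat φ i f = fun q =>
        ((fun q : Pt => (fun q : Pt => q.1) q * eop φ ((0:ℝ), Pi.single i 1) f q) q
          + (fun q : Pt => (fun q : Pt => q.2.1 i) q * eop φ ((1:ℝ), (0:Fin 3 → ℝ)) f q) q)
        + (fun q : Pt => (fun q : Pt => vzero q.2.2) q * Vop i f q) q := rfl
    rw [e0, eop_add ((ht.mul hei).add (hx.mul he0)) (hv0.mul hVi),
      eop_add (ht.mul hei) (hx.mul he0),
      eop_mul hφ ht hei, eop_mul hφ hx he0, eop_mul hφ hv0 hVi,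
      eop_coord_t, eop_coord_x, eop_vzero]
  have h2 : Zhat φ i (eop φ d f) p
      = p.1 * eop φ ((0:ℝ), Pi.single i 1) (eop φ d f) p
        + p.2.1 i * eop φ ((1:ℝ), (0:Fin 3 → ℝ)) (eop φ d f) p
        + vzero p.2.2 * Vop i (eop φ d f) p := rfl
  rw [h2, h1, eop_comm hφ hf ((0:ℝ), Pi.single i 1) d p,
    eop_comm hφ hf ((1:ℝ), (0:Fin 3 → ℝ)) d p, V_eop hφ hf i d p]
  have hvs := vzero_sq p.2.2
  have hvne : vzero p.2.2 ≠ 0 := ne_of_gt (vzero_pos p.2.2)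
  field_simp
  linear_combination (-(Dphi φ d (p.1, p.2.1)) * Vop i f p) * hvs

end CommAux

/-- Lemma 3.6, boost case: `[𝐙̂_i, 𝐞_j] f = −δ_{ij}·𝐞_0 f − (∂_{x^j}φ/v⁰)·∂_{vⁱ} f`
and `[𝐙̂_i, 𝐞_0] f = −𝐞_i f − (∂_t φ/v⁰)·∂_{vⁱ} f`. -/
theorem commutator_Zhat_generalizedTranslation
    (φ : ℝ × (Fin 3 → ℝ) → ℝ) (hφ : ContDiff ℝ (⊤ : ℕ∞) φ)
    (f : Pt → ℝ) (hf : ContDiff ℝ (⊤ : ℕ∞) f) (i : Fin 3) (p : Pt) :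
    (∀ j : Fin 3,
      Zhat φ i (eop φ ((0 : ℝ), Pi.single j 1) f) p
          - eop φ ((0 : ℝ), Pi.single j 1) (Zhat φ i f) p
        = -(if i = j then (1 : ℝ) else 0) * eop φ ((1 : ℝ), (0 : Fin 3 → ℝ)) f p
          - (Dphi φ ((0 : ℝ), Pi.single j 1) (p.1, p.2.1) / vzero p.2.2) * Vop i f p) ∧
    (Zhat φ i (eop φ ((1 : ℝ), (0 : Fin 3 → ℝ)) f) p
        - eop φ ((1 : ℝ), (0 : Fin 3 → ℝ)) (Zhat φ i f) p
      = -eop φ ((0 : ℝ), Pi.single i 1) f p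
        - (Dphi φ ((1 : ℝ), (0 : Fin 3 → ℝ)) (p.1, p.2.1) / vzero p.2.2) * Vop i f p) := by
  constructor
  · intro j
    rw [CommAux.main_commutator hφ hf i ((0 : ℝ), Pi.single j 1) p]
    simp [Pi.single_apply]
  · rw [CommAux.main_commutator hφ hf i ((1 : ℝ), (0 : Fin 3 → ℝ)) p]
    simp
end
end

section
/- Lower bounds for the hyperboloidal momentum weight (Lemma 6.2): let (t,x) ∈ ℝ × ℝ³ satisfy t ≥ √(1+|x|²) (so (t,x) lies in the future J⁺(H₁) of the unit hyperboloid), set ρ = √(t² − |x|²) and u = t − |x|, and for v ∈ ℝ³ set v⁰ = √(1+|v|²) and v^ρ = (t v⁰ − x·v)/ρ. Then the following three inequalities hold: (i) v^ρ ≥ 1; (ii) v^ρ ≥ (u/(2ρ))·v⁰; (iii) v^ρ ≥ t/(2ρ v⁰). -/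
noncomputable section

/-- Hyperboloidal time `ρ = √(t² − |x|²)`. -/
def hrho (t : ℝ) (x : Fin 3 → ℝ) : ℝ := Real.sqrt (t ^ 2 - ∑ i, (x i) ^ 2)

/-- `v^ρ = (t v⁰ − x·v)/ρ`, the contraction of the momentum with the future unit normal
to the hyperboloid through `(t,x)`. -/
def vrho (t : ℝ) (x v : Fin 3 → ℝ) : ℝ :=
  (t * vzero v - ∑ i, x i * v i) / hrho t x

set_option maxHeartbeats 1600000

/-- Lemma 6.2: in `J⁺(H₁)` one has `v^ρ ≥ 1`, `v^ρ ≥ (u/(2ρ))v⁰`, and `v^ρ ≥ t/(2ρv⁰)`,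
where `u = t − |x|`. -/
theorem vrho_lower_bounds (t : ℝ) (x v : Fin 3 → ℝ)
    (h : Real.sqrt (1 + ∑ i, (x i) ^ 2) ≤ t) :
    1 ≤ vrho t x v ∧
    (t - rad x) / (2 * hrho t x) * vzero v ≤ vrho t x v ∧
    t / (2 * hrho t x * vzero v) ≤ vrho t x v := by
  have S0 : (0:ℝ) ≤ ∑ i, (x i) ^ 2 := Finset.sum_nonneg fun i _ => sq_nonneg _
  have W0 : (0:ℝ) ≤ ∑ i, (v i) ^ 2 := Finset.sum_nonneg fun i _ => sq_nonneg _
  set S := ∑ i, (x i) ^ 2 with hS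
  set W := ∑ i, (v i) ^ 2 with hW
  set D := ∑ i, x i * v i with hD
  set r := rad x with hrdef
  set w := Real.sqrt W with hwdef
  set v0 := vzero v with hv0def
  set ρ := hrho t x with hρdef
  have hsq : Real.sqrt (1 + S) ^ 2 = 1 + S := Real.sq_sqrt (by linarith)
  have hsn : 0 ≤ Real.sqrt (1 + S) := Real.sqrt_nonneg _
  have ht2 : 1 + S ≤ t ^ 2 := by nlinarith
  have ht1 : 1 ≤ t := by nlinarith
  have hr2 : r ^ 2 = S := Real.sq_sqrt S0
  have hr0 : 0 ≤ r := Real.sqrt_nonneg _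
  have hw2 : w ^ 2 = W := Real.sq_sqrt W0
  have hw0 : 0 ≤ w := Real.sqrt_nonneg _
  have hv02 : v0 ^ 2 = 1 + W := Real.sq_sqrt (by linarith)
  have hv01 : 1 ≤ v0 := by
    have := Real.sqrt_le_sqrt (show (1:ℝ) ≤ 1 + W by linarith)
    simpa [hv0def, vzero, ← hW] using this
  have hwv0 : w ≤ v0 := by nlinarith
  have hρ2 : ρ ^ 2 = t ^ 2 - S := Real.sq_sqrt (by nlinarith)
  have hρ1 : 1 ≤ ρ := by
    have := Real.sqrt_le_sqrt (show (1:ℝ) ≤ t ^ 2 - S by nlinarith)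
    simpa [hρdef, hrho, ← hS] using this
  have hρ0 : 0 < ρ := by linarith
  -- Cauchy–Schwarz
  have hCS : D ^ 2 ≤ S * W := Finset.sum_mul_sq_le_sq_mul_sq Finset.univ x v
  have hDrw : D ≤ r * w := by
    have h1 : D ≤ |D| := le_abs_self _
    have h2 : |D| = Real.sqrt (D ^ 2) := (Real.sqrt_sq_eq_abs D).symm
    have h3 : Real.sqrt (D ^ 2) ≤ Real.sqrt (S * W) := Real.sqrt_le_sqrt hCS
    have h4 : Real.sqrt (S * W) = r * w := by
      rw [Real.sqrt_mul S0, hrdef, rad, ← hS, hwdef]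
    linarith
  set N := t * v0 - D with hNdef
  have hvrho : vrho t x v = N / ρ := by
    simp only [vrho, hNdef, hD, hv0def, hρdef]
  clear_value S W D r w v0 ρ N
  clear h hsq hsn hCS hS hW hD hrdef hwdef hv0def hρdef
  -- t v0 ≥ 1 + r w
  have hkey : 1 + r * w ≤ t * v0 := by
    nlinarith [sq_nonneg (r - w), sq_nonneg (t * v0 - 1 - r * w), mul_pos (lt_of_lt_of_le zero_lt_one ht1) (lt_of_lt_of_le zero_lt_one hv01)]
  -- (i)
  have hNρ : ρ ≤ N := by
    nlinarith [sq_nonneg (t * w - r * v0), hDrw, hkey, mul_nonneg hr0 hw0]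
  have h1 : 1 ≤ vrho t x v := by
    rw [hvrho, le_div_iff₀ hρ0]; linarith
  refine ⟨h1, ?_, ?_⟩
  · -- (ii)
    have hn2 : (t - r) * v0 / 2 ≤ N := by
      nlinarith [mul_nonneg hr0 (sub_nonneg.2 hwv0), mul_le_mul_of_nonneg_right hwv0 hr0]
    have heq : (t - r) / (2 * ρ) * v0 = ((t - r) * v0 / 2) / ρ := by ring
    rw [hvrho, heq]
    gcongr
  · -- (iii)
    have ht0 : (0:ℝ) ≤ t := by linarith
    have hv00 : (0:ℝ) ≤ v0 := by linarith
    have hwv0' : w * v0 ≤ 1 / 2 + w ^ 2 := by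
      nlinarith [sq_nonneg (w * v0 - 1/2 - w^2), sq_nonneg (w * v0 + 1/2 + w^2)]
    have htr : r ≤ t := by nlinarith
    have hA : 2 * v0 * D ≤ 2 * v0 * (r * w) := by
      have := mul_le_mul_of_nonneg_left hDrw (show (0:ℝ) ≤ 2 * v0 by linarith)
      linarith
    have hC : r * (w * v0) ≤ t * (w * v0) :=
      mul_le_mul_of_nonneg_right htr (by positivity)
    have hB : t * (w * v0) ≤ t * (1 / 2 + w ^ 2) :=
      mul_le_mul_of_nonneg_left hwv0' ht0
    have h2N : t ≤ 2 * N * v0 := by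
      rw [hNdef]
      nlinarith [hA, hC, hB, hv02]
    rw [hvrho, div_le_div_iff₀ (by positivity) hρ0]
    nlinarith [mul_le_mul_of_nonneg_right h2N hρ0.le]
end
end

section
/- Integral estimate on hyperboloids (Lemma B.1): let n, m, p, r be nonnegative integers with p − n + r < −1 and m > r. Then there exists a constant C = C(n,m,p,r) such that for every real ρ ≥ 1: ∫_0^∞ s^p / ( (1 + √(ρ² + s²) − s)^m · (ρ² + s²)^{n/2} ) ds ≤ C · ρ^{p+1−n−r}. -/
open MeasureTheory Set

/-- auxiliary model function: `u^p √(1+u²)^r / √(1+u²)^n`. -/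
noncomputable def hypAux (p r n : ℕ) (u : ℝ) : ℝ :=
  u ^ p * Real.sqrt (1 + u ^ 2) ^ r / Real.sqrt (1 + u ^ 2) ^ n

lemma hypAux_cont (p r n : ℕ) : Continuous (hypAux p r n) := by
  have hpos : ∀ x : ℝ, 0 < Real.sqrt (1 + x ^ 2) := by
    intro x
    exact Real.sqrt_pos.mpr (by positivity)
  apply Continuous.div
  · exact (continuous_pow p).mul ((Real.continuous_sqrt.comp (by continuity)).pow r)
  · exact (Real.continuous_sqrt.comp (by continuity)).pow n
  · intro x
    exact ne_of_gt (pow_pos (hpos x) n)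

lemma hypAux_nonneg (p r n : ℕ) (u : ℝ) (hu : 0 ≤ u) : 0 ≤ hypAux p r n u := by
  unfold hypAux
  positivity

lemma hypAux_integrable (n p r : ℕ) (h1 : (p : ℤ) - (n : ℤ) + (r : ℤ) < -1) :
    IntegrableOn (hypAux p r n) (Ioi 0) := by
  have hexp : ((p : ℝ) + r - n) < -1 := by
    have : ((p : ℝ)) - n + r < -1 := by exact_mod_cast h1
    linarith
  rw [← Ioc_union_Ioi_eq_Ioi (zero_le_one' ℝ)]
  apply IntegrableOn.union
  · exact (hypAux_cont p r n).integrableOn_Ioc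
  · have hInt : IntegrableOn (fun u : ℝ => 2 ^ r * u ^ ((p : ℝ) + r - n)) (Ioi 1) :=
      (integrableOn_Ioi_rpow_of_lt hexp one_pos).const_mul _
    refine hInt.mono' ((hypAux_cont p r n).aestronglyMeasurable.restrict) ?_
    rw [ae_restrict_iff' measurableSet_Ioi]
    filter_upwards with u hu
    have hu1 : (1 : ℝ) < u := hu
    have hu0 : (0 : ℝ) < u := lt_trans one_pos hu1
    set S := Real.sqrt (1 + u ^ 2) with hS
    have hS0 : 0 < S := Real.sqrt_pos.mpr (by positivity)
    have hSl : u ≤ S := by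
      rw [← Real.sqrt_sq hu0.le]
      exact Real.sqrt_le_sqrt (by nlinarith)
    have hSu : S ≤ 2 * u := by
      have h := Real.sqrt_le_sqrt (show 1 + u ^ 2 ≤ (2 * u) ^ 2 by nlinarith)
      rwa [Real.sqrt_sq (by linarith)] at h
    have hb : hypAux p r n u ≤ u ^ p * (2 * u) ^ r / u ^ n := by
      unfold hypAux
      rw [← hS]
      apply div_le_div₀ (by positivity)
        (mul_le_mul_of_nonneg_left (pow_le_pow_left₀ hS0.le hSu r) (by positivity))
        (by positivity) (pow_le_pow_left₀ hu0.le hSl n)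
    have heq : u ^ p * (2 * u) ^ r / u ^ n = 2 ^ r * u ^ ((p : ℝ) + r - n) := by
      rw [Real.rpow_sub hu0, Real.rpow_add hu0, Real.rpow_natCast, Real.rpow_natCast,
        Real.rpow_natCast, mul_pow]
      ring
    rw [Real.norm_eq_abs, abs_of_nonneg (hypAux_nonneg p r n u hu0.le)]
    rw [← heq]
    exact hb

/-- Lemma B.1 (integral estimate on hyperboloids): for nonnegative integers `n, m, p, r`
with `p − n + r < −1` and `m > r`, there is a constant `C = C(n,m,p,r)` such that for all
`ρ ≥ 1`, `∫_0^∞ s^p / ((1 + √(ρ²+s²) − s)^m (ρ²+s²)^{n/2}) ds ≤ C ρ^{p+1−n−r}`. -/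
theorem hyperboloid_integral_estimate
    (n m p r : ℕ) (h1 : (p : ℤ) - (n : ℤ) + (r : ℤ) < -1) (h2 : r < m) :
    ∃ C : ℝ, ∀ ρ : ℝ, 1 ≤ ρ →
      (∫ s in Set.Ioi (0 : ℝ),
          s ^ p / ((1 + Real.sqrt (ρ ^ 2 + s ^ 2) - s) ^ m
            * (ρ ^ 2 + s ^ 2) ^ ((n : ℝ) / 2)))
        ≤ C * ρ ^ ((p : ℤ) + 1 - (n : ℤ) - (r : ℤ)) := by
  set I : ℝ := ∫ u in Ioi (0 : ℝ), hypAux p r n u with hIdef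
  have hI0 : 0 ≤ I := by
    apply setIntegral_nonneg measurableSet_Ioi
    intro u hu
    exact hypAux_nonneg p r n u (le_of_lt hu)
  refine ⟨2 ^ r * I, fun ρ hρ => ?_⟩
  have hρ0 : (0 : ℝ) < ρ := lt_of_lt_of_le one_pos hρ
  set c : ℝ := 2 ^ r * ρ ^ (p + r) / (ρ ^ (2 * r) * ρ ^ n) with hcdef
  have hc0 : 0 ≤ c := by positivity
  -- integrability of the dominating function
  have hcomp : IntegrableOn (fun s => hypAux p r n (ρ⁻¹ * s)) (Ioi 0) := by
    have h := (integrableOn_Ioi_comp_mul_left_iff (hypAux p r n) 0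
      (inv_pos.mpr hρ0)).mpr
    simpa [mul_zero] using h (by simpa using hypAux_integrable n p r h1)
  have hG : Integrable (fun s => c * hypAux p r n (ρ⁻¹ * s))
      (volume.restrict (Ioi 0)) := hcomp.const_mul c
  -- pointwise bound
  have hpt : ∀ s : ℝ, s ∈ Ioi (0 : ℝ) →
      s ^ p / ((1 + Real.sqrt (ρ ^ 2 + s ^ 2) - s) ^ m
        * (ρ ^ 2 + s ^ 2) ^ ((n : ℝ) / 2)) ≤ c * hypAux p r n (ρ⁻¹ * s) := by
    intro s hs
    have hs0 : (0 : ℝ) < s := hs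
    have hA : (0 : ℝ) < ρ ^ 2 + s ^ 2 := by positivity
    set T := Real.sqrt (ρ ^ 2 + s ^ 2) with hTdef
    have hT : 0 < T := Real.sqrt_pos.mpr hA
    have hT2 : T ^ 2 = ρ ^ 2 + s ^ 2 := Real.sq_sqrt hA.le
    have hsT : s ≤ T := by
      have h := Real.sqrt_le_sqrt (show s ^ 2 ≤ ρ ^ 2 + s ^ 2 by nlinarith)
      rwa [Real.sqrt_sq hs0.le] at h
    have hw1 : (1 : ℝ) ≤ 1 + T - s := by linarith
    have hTn : (ρ ^ 2 + s ^ 2) ^ ((n : ℝ) / 2) = T ^ n := by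
      rw [show ((n : ℝ) / 2) = (1 / 2) * (n : ℝ) by ring, Real.rpow_mul hA.le,
        Real.rpow_natCast, ← Real.sqrt_eq_rpow]
    have hkey : ρ ^ 2 / (2 * T) ≤ 1 + T - s := by
      rw [div_le_iff₀ (by positivity)]
      nlinarith [sq_nonneg (T - s)]
    have hwm : (ρ ^ 2 / (2 * T)) ^ r ≤ (1 + T - s) ^ m :=
      le_trans (pow_le_pow_left₀ (by positivity) hkey r) (pow_le_pow_right₀ hw1 h2.le)
    have h5 : s ^ p / ((1 + T - s) ^ m * (ρ ^ 2 + s ^ 2) ^ ((n : ℝ) / 2))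
        ≤ s ^ p / ((ρ ^ 2 / (2 * T)) ^ r * T ^ n) := by
      rw [hTn]
      exact div_le_div_of_nonneg_left (by positivity) (by positivity)
        (mul_le_mul_of_nonneg_right hwm (by positivity))
    have hsq : Real.sqrt (1 + (ρ⁻¹ * s) ^ 2) = T / ρ := by
      have he : 1 + (ρ⁻¹ * s) ^ 2 = (T / ρ) ^ 2 := by
        field_simp
        linarith [hT2]
      rw [he, Real.sqrt_sq (by positivity)]
    have heq : s ^ p / ((ρ ^ 2 / (2 * T)) ^ r * T ^ n) = c * hypAux p r n (ρ⁻¹ * s) := by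
      unfold hypAux
      rw [hsq, hcdef]
      field_simp
      simp only [div_pow]
      field_simp
      ring
    calc s ^ p / ((1 + T - s) ^ m * (ρ ^ 2 + s ^ 2) ^ ((n : ℝ) / 2))
        ≤ s ^ p / ((ρ ^ 2 / (2 * T)) ^ r * T ^ n) := h5
      _ = c * hypAux p r n (ρ⁻¹ * s) := heq
  -- nonnegativity of the integrand
  have hnn : ∀ s : ℝ, s ∈ Ioi (0 : ℝ) →
      0 ≤ s ^ p / ((1 + Real.sqrt (ρ ^ 2 + s ^ 2) - s) ^ m
        * (ρ ^ 2 + s ^ 2) ^ ((n : ℝ) / 2)) := by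
    intro s hs
    have hs0 : (0 : ℝ) < s := hs
    have hA : (0 : ℝ) < ρ ^ 2 + s ^ 2 := by positivity
    have hsT : s ≤ Real.sqrt (ρ ^ 2 + s ^ 2) := by
      have h := Real.sqrt_le_sqrt (show s ^ 2 ≤ ρ ^ 2 + s ^ 2 by nlinarith)
      rwa [Real.sqrt_sq hs0.le] at h
    have hw : (0 : ℝ) ≤ 1 + Real.sqrt (ρ ^ 2 + s ^ 2) - s := by linarith
    apply div_nonneg (pow_nonneg hs0.le p)
    exact mul_nonneg (pow_nonneg hw m) (Real.rpow_nonneg hA.le _)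
  -- compare integrals
  have hmono : (∫ s in Ioi (0 : ℝ),
      s ^ p / ((1 + Real.sqrt (ρ ^ 2 + s ^ 2) - s) ^ m
        * (ρ ^ 2 + s ^ 2) ^ ((n : ℝ) / 2)))
      ≤ ∫ s in Ioi (0 : ℝ), c * hypAux p r n (ρ⁻¹ * s) := by
    apply integral_mono_of_nonneg
    · refine (ae_restrict_iff' measurableSet_Ioi).mpr ?_
      filter_upwards with s hs using hnn s hs
    · exact hG
    · refine (ae_restrict_iff' measurableSet_Ioi).mpr ?_
      filter_upwards with s hs using hpt s hs
  -- compute the dominating integral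
  have hcalc : (∫ s in Ioi (0 : ℝ), c * hypAux p r n (ρ⁻¹ * s)) = c * (ρ * I) := by
    rw [integral_const_mul, integral_comp_mul_left_Ioi (hypAux p r n) 0 (inv_pos.mpr hρ0)]
    simp [inv_inv, smul_eq_mul, hIdef]
  have hzpow : (ρ : ℝ) ^ ((p : ℤ) + 1 - (n : ℤ) - (r : ℤ))
      = ρ ^ (p + 1) / (ρ ^ n * ρ ^ r) := by
    rw [show (p : ℤ) + 1 - (n : ℤ) - (r : ℤ) = ((p + 1 : ℕ) : ℤ) - ((n + r : ℕ) : ℤ) by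
      push_cast; ring, zpow_sub₀ hρ0.ne', zpow_natCast, zpow_natCast, pow_add]
    ring
  have hfinal : c * (ρ * I) = 2 ^ r * I * ρ ^ ((p : ℤ) + 1 - (n : ℤ) - (r : ℤ)) := by
    rw [hzpow, hcdef]
    field_simp
    ring
  calc (∫ s in Ioi (0 : ℝ),
      s ^ p / ((1 + Real.sqrt (ρ ^ 2 + s ^ 2) - s) ^ m
        * (ρ ^ 2 + s ^ 2) ^ ((n : ℝ) / 2)))
      ≤ ∫ s in Ioi (0 : ℝ), c * hypAux p r n (ρ⁻¹ * s) := hmono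
    _ = c * (ρ * I) := hcalc
    _ = 2 ^ r * I * ρ ^ ((p : ℤ) + 1 - (n : ℤ) - (r : ℤ)) := hfinal
end
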